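/- arXiv:1807.06218 — 7 statements merged into one kernel-verified Lean document; each statement's English description precedes it below -/
import Mathlib

section
/- Let e ≥ 2 be an integer with q ≡ 1 (mod e), and let j be an integer with gcd(j,e) = 1. If j̄ denotes an inverse of j modulo e, then B_e(i·j̄, j̄) = B_e(i,j) for every integer i, where the arguments of B_e are read modulo e. -/
open Finset
open scoped Classical

/-- The primitive `e`-th root of unity `ζ_e = exp(2πi/e)` in `ℂ`. -/
noncomputable def zetaC (e : ℕ) : ℂ := Complex.exp (2 * Real.pi * Complex.I / (e : ℂ))

/-- The power `χ_e^i` of the multiplicative character `χ_e` of order `e` on `F`,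
defined via a discrete logarithm `ind` to a fixed generator:
`χ_e^i(x) = ζ_e^(i·ind x)` for `x ≠ 0`, extended by `χ_e^i(0) = 0`. -/

noncomputable def chiPow {F : Type*} [Field F] (e : ℕ) (ind : F → ℕ) (i : ℤ) (x : F) : ℂ :=
  if x = 0 then 0 else zetaC e ^ (i * (ind x : ℤ))

/-- The Jacobi sum `J_e(i,j) = Σ_{v ∈ F} χ_e^i(v) χ_e^j(v+1)`. -/
noncomputable def jacobiSumInd {F : Type*} [Field F] [Fintype F]
    (e : ℕ) (ind : F → ℕ) (i j : ℤ) : ℂ :=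
  ∑ v : F, chiPow e ind i v * chiPow e ind j (v + 1)

/-- The cyclotomic number `(a,b)_e`: the number of `v ∈ F` with `v ≠ 0`, `v + 1 ≠ 0`,
`ind v ≡ a (mod e)` and `ind (v+1) ≡ b (mod e)`. -/
noncomputable def cycNum {F : Type*} [Field F] (e : ℕ) (ind : F → ℕ) (a b : ℤ) : ℕ :=
  Nat.card {v : F // v ≠ 0 ∧ v + 1 ≠ 0 ∧
    (e : ℤ) ∣ ((ind v : ℤ) - a) ∧ (e : ℤ) ∣ ((ind (v + 1) : ℤ) - b)}

/-- The Dickson–Hurwitz sum `B_e(i,j) = Σ_{h=0}^{e-1} (h, i - j·h)_e`. -/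
noncomputable def dicksonHurwitz {F : Type*} [Field F] (e : ℕ) (ind : F → ℕ) (i j : ℤ) : ℕ :=
  ∑ h ∈ Finset.range e, cycNum e ind (h : ℤ) (i - j * h)

/-- The Dickson–Hurwitz sum counts `v ≠ 0, -1` with `ind(v+1) + j·ind v ≡ i (mod e)`. -/
lemma dh_count {F : Type*} [Field F] [Fintype F] (e : ℕ) (he : 0 < e) (ind : F → ℕ)
    (i j : ℤ) :
    dicksonHurwitz e ind i j =
      (Finset.univ.filter (fun v : F => v ≠ 0 ∧ v + 1 ≠ 0 ∧
        (e : ℤ) ∣ ((ind (v + 1) : ℤ) + j * (ind v : ℤ) - i))).card := by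
  unfold dicksonHurwitz cycNum
  have hcard : ∀ a b : ℤ, Nat.card {v : F // v ≠ 0 ∧ v + 1 ≠ 0 ∧
      (e : ℤ) ∣ ((ind v : ℤ) - a) ∧ (e : ℤ) ∣ ((ind (v + 1) : ℤ) - b)} =
      (Finset.univ.filter (fun v : F => v ≠ 0 ∧ v + 1 ≠ 0 ∧
      (e : ℤ) ∣ ((ind v : ℤ) - a) ∧ (e : ℤ) ∣ ((ind (v + 1) : ℤ) - b))).card := by
    intro a b
    rw [Nat.card_eq_fintype_card, Fintype.card_subtype]
  simp_rw [hcard, Finset.card_filter]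
  rw [Finset.sum_comm]
  refine Finset.sum_congr rfl (fun v _ => ?_)
  by_cases hv0 : v = 0
  · simp [hv0]
  by_cases hv1 : v + 1 = 0
  · simp [hv1]
  simp only [hv0, hv1, not_false_iff, true_and, ne_eq]
  rw [Finset.sum_eq_single (ind v % e)]
  · -- main term
    have hd1 : (e : ℤ) ∣ ((ind v : ℤ) - ((ind v % e : ℕ) : ℤ)) := by
      refine ⟨(ind v : ℤ) / e, ?_⟩
      have h1 := Int.mul_ediv_add_emod ((ind v : ℕ) : ℤ) (e : ℤ)
      have h2 : ((ind v % e : ℕ) : ℤ) = ((ind v : ℕ) : ℤ) % (e : ℤ) := by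
        push_cast; ring
      rw [h2]; linarith
    have hdiff : (e : ℤ) ∣ (((ind (v + 1) : ℤ) + j * (ind v : ℤ) - i) -
        ((ind (v + 1) : ℤ) - (i - j * ((ind v % e : ℕ) : ℤ)))) := by
      have heq : (((ind (v + 1) : ℤ) + j * (ind v : ℤ) - i) -
          ((ind (v + 1) : ℤ) - (i - j * ((ind v % e : ℕ) : ℤ)))) =
          j * ((ind v : ℤ) - ((ind v % e : ℕ) : ℤ)) := by ring
      rw [heq]; exact hd1.mul_left j
    have hiff : ((e : ℤ) ∣ ((ind (v + 1) : ℤ) - (i - j * ((ind v % e : ℕ) : ℤ)))) ↔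
        ((e : ℤ) ∣ ((ind (v + 1) : ℤ) + j * (ind v : ℤ) - i)) := by
      constructor
      · intro h
        have h2 := dvd_add h hdiff
        have heq : ((ind (v + 1) : ℤ) - (i - j * ((ind v % e : ℕ) : ℤ))) +
            (((ind (v + 1) : ℤ) + j * (ind v : ℤ) - i) -
            ((ind (v + 1) : ℤ) - (i - j * ((ind v % e : ℕ) : ℤ)))) =
            ((ind (v + 1) : ℤ) + j * (ind v : ℤ) - i) := by ring
        rwa [heq] at h2
      · intro h
        have h2 := dvd_sub h hdiff
        have heq : ((ind (v + 1) : ℤ) + j * (ind v : ℤ) - i) -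
            (((ind (v + 1) : ℤ) + j * (ind v : ℤ) - i) -
            ((ind (v + 1) : ℤ) - (i - j * ((ind v % e : ℕ) : ℤ)))) =
            ((ind (v + 1) : ℤ) - (i - j * ((ind v % e : ℕ) : ℤ))) := by ring
        rwa [heq] at h2
    have hcond : ((e : ℤ) ∣ ((ind v : ℤ) - ((ind v % e : ℕ) : ℤ)) ∧
        (e : ℤ) ∣ ((ind (v + 1) : ℤ) - (i - j * ((ind v % e : ℕ) : ℤ)))) ↔
        ((e : ℤ) ∣ ((ind (v + 1) : ℤ) + j * (ind v : ℤ) - i)) := by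
      constructor
      · rintro ⟨-, h⟩; exact hiff.mp h
      · intro h; exact ⟨hd1, hiff.mpr h⟩
    simp only [hcond]
  · -- other terms vanish
    intro b hb hne
    rw [if_neg]
    rintro ⟨h1, -⟩
    apply hne
    have hble : b < e := Finset.mem_range.mp hb
    have hmod : ((b : ℤ)) % (e : ℤ) = ((ind v : ℕ) : ℤ) % (e : ℤ) := by
      have := Int.emod_emod_of_dvd -- dummy
      have hme : ((b : ℤ)) ≡ ((ind v : ℕ) : ℤ) [ZMOD (e : ℤ)] := by
        rw [Int.modEq_iff_dvd]; exact h1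
      exact hme
    have hb2 : ((b : ℤ)) % (e : ℤ) = (b : ℤ) :=
      Int.emod_eq_of_lt (by positivity) (by exact_mod_cast hble)
    have hmod2 : ((ind v % e : ℕ) : ℤ) = ((ind v : ℕ) : ℤ) % (e : ℤ) := by
      push_cast; ring
    have hfin : ((b : ℕ) : ℤ) = ((ind v % e : ℕ) : ℤ) := by rw [hmod2, ← hmod, hb2]
    exact Nat.cast_injective hfin
  · intro h
    exact absurd (Finset.mem_range.mpr (Nat.mod_lt _ he)) h

theorem dicksonHurwitz_inv_arg {F : Type*} [Field F] [Fintype F]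
    (p r : ℕ) (hp : p.Prime) (hr : 0 < r) (hcard : Fintype.card F = p ^ r)
    (γ : Fˣ) (hγ : ∀ x : Fˣ, ∃ k : ℕ, γ ^ k = x)
    (ind : F → ℕ) (hind : ∀ x : F, x ≠ 0 → (γ : F) ^ ind x = x)
    (e : ℕ) (he : 2 ≤ e) (hqe : Fintype.card F % e = 1)
    (j jbar : ℤ) (hj : Int.gcd j e = 1) (hjbar : (e : ℤ) ∣ (j * jbar - 1)) :
    ∀ i : ℤ, dicksonHurwitz e ind (i * jbar) jbar = dicksonHurwitz e ind i j := by
  intro i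
  have he0 : 0 < e := by omega
  set n := Fintype.card F - 1 with hn
  have hcardpos : 1 ≤ Fintype.card F := Fintype.card_pos
  have hen : (e : ℤ) ∣ (n : ℤ) := by
    have h1 := Nat.div_add_mod (Fintype.card F) e
    refine Int.natCast_dvd_natCast.mpr ⟨Fintype.card F / e, by omega⟩
  have horder : orderOf γ = Fintype.card Fˣ := by
    rw [← Nat.card_eq_fintype_card]
    apply orderOf_eq_card_of_forall_mem_zpowers
    intro x
    obtain ⟨k, hk⟩ := hγ x
    exact ⟨(k : ℤ), by simpa using hk⟩
  have hcardu : Fintype.card Fˣ = n := by rw [hn, Fintype.card_units]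
  have hpowinj : ∀ a b : ℕ, (γ : F) ^ a = (γ : F) ^ b → a ≡ b [MOD n] := by
    intro a b hab
    have h0 : ((γ ^ a : Fˣ) : F) = ((γ ^ b : Fˣ) : F) := by
      rw [Units.val_pow_eq_pow_val, Units.val_pow_eq_pow_val]; exact hab
    have h1 : γ ^ a = γ ^ b := Units.ext h0
    have h2 := pow_eq_pow_iff_modEq.mp h1
    rwa [horder, hcardu] at h2
  have hmul : ∀ x y : F, x ≠ 0 → y ≠ 0 →
      (e : ℤ) ∣ ((ind (x * y) : ℤ) - ((ind x : ℤ) + (ind y : ℤ))) := by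
    intro x y hx hy
    have h1 : (γ : F) ^ (ind (x * y)) = (γ : F) ^ (ind x + ind y) := by
      rw [pow_add, hind x hx, hind y hy, hind (x * y) (mul_ne_zero hx hy)]
    have h2 := (hpowinj _ _ h1).dvd
    have h3 : (e : ℤ) ∣ (((ind x + ind y : ℕ) : ℤ) - ((ind (x * y) : ℕ) : ℤ)) :=
      hen.trans h2
    have h4 : ((ind (x * y) : ℤ) - ((ind x : ℤ) + (ind y : ℤ))) =
        -((((ind x + ind y : ℕ) : ℤ)) - ((ind (x * y) : ℕ) : ℤ)) := by push_cast; ring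
    rw [h4]; exact dvd_neg.mpr h3
  have hneg1 : (-1 : F) ≠ 0 := neg_ne_zero.mpr one_ne_zero
  set t := ind (-1 : F) with ht
  have h2t : (e : ℤ) ∣ (2 * (t : ℤ)) := by
    have h1 : (γ : F) ^ (t + t) = (γ : F) ^ 0 := by
      rw [pow_add, hind _ hneg1, pow_zero]; ring
    have h2 := (hpowinj _ _ h1).dvd
    have h3 : (e : ℤ) ∣ (((0 : ℕ) : ℤ) - ((t + t : ℕ) : ℤ)) := hen.trans h2
    have h4 : (2 * (t : ℤ)) = -((((0 : ℕ) : ℤ)) - ((t + t : ℕ) : ℤ)) := by push_cast; ring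
    rw [h4]; exact dvd_neg.mpr h3
  have hneg : ∀ x : F, x ≠ 0 → (e : ℤ) ∣ ((ind (-x) : ℤ) - ((t : ℤ) + (ind x : ℤ))) := by
    intro x hx
    have := hmul (-1 : F) x hneg1 hx
    rwa [neg_one_mul] at this
  have hcopj : IsCoprime (j : ℤ) (e : ℤ) := Int.isCoprime_iff_gcd_eq_one.mpr hj
  obtain ⟨c, hc⟩ := hjbar
  have hE : (e : ℤ) ∣ (j * jbar - 1) := ⟨c, hc⟩
  have hcopjb : IsCoprime (jbar : ℤ) (e : ℤ) := ⟨j, -c, by linarith⟩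
  have haux : ∀ k : ℤ, IsCoprime k (e : ℤ) → (e : ℤ) ∣ ((1 + k) * (t : ℤ)) := by
    intro k hk
    rcases Int.even_or_odd k with ⟨m, hm⟩ | ⟨m, hm⟩
    · have h2e : IsCoprime (2 : ℤ) (e : ℤ) :=
        hk.of_isCoprime_of_dvd_left ⟨m, by omega⟩
      have het : (e : ℤ) ∣ (t : ℤ) := (h2e.symm).dvd_of_dvd_mul_left h2t
      exact het.mul_left (1 + k)
    · have heq : (1 + k) * (t : ℤ) = (m + 1) * (2 * (t : ℤ)) := by rw [hm]; ring
      rw [heq]; exact h2t.mul_left (m + 1)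
  have hGj : (e : ℤ) ∣ ((1 + j) * (t : ℤ)) := haux j hcopj
  have hGjb : (e : ℤ) ∣ ((1 + jbar) * (t : ℤ)) := haux jbar hcopjb
  rw [dh_count e he0 ind (i * jbar) jbar, dh_count e he0 ind i j]
  refine Finset.card_bij' (fun v _ => -(v + 1)) (fun v _ => -(v + 1)) ?_ ?_ ?_ ?_
  · -- forward membership
    intro v hv
    simp only [Finset.mem_filter, Finset.mem_univ, true_and] at hv ⊢
    obtain ⟨h1, h2, h3⟩ := hv
    have harg : -(v + 1) + 1 = -v := by ring
    refine ⟨neg_ne_zero.mpr h2, by rw [harg]; exact neg_ne_zero.mpr h1, ?_⟩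
    rw [harg]
    have hD1 := hneg v h1
    have hD2 := hneg (v + 1) h2
    have key : (ind (-v) : ℤ) + j * (ind (-(v + 1)) : ℤ) - i =
        j * ((ind (v + 1) : ℤ) + jbar * (ind v : ℤ) - i * jbar)
        + ((ind (-v) : ℤ) - ((t : ℤ) + (ind v : ℤ)))
        + j * ((ind (-(v + 1)) : ℤ) - ((t : ℤ) + (ind (v + 1) : ℤ)))
        + (1 + j) * (t : ℤ) + (j * jbar - 1) * (i - (ind v : ℤ)) := by ring
    rw [key]
    exact dvd_add (dvd_add (dvd_add (dvd_add (h3.mul_left j) hD1) (hD2.mul_left j)) hGj)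
      (hE.mul_right _)
  · -- backward membership
    intro v hv
    simp only [Finset.mem_filter, Finset.mem_univ, true_and] at hv ⊢
    obtain ⟨h1, h2, h3⟩ := hv
    have harg : -(v + 1) + 1 = -v := by ring
    refine ⟨neg_ne_zero.mpr h2, by rw [harg]; exact neg_ne_zero.mpr h1, ?_⟩
    rw [harg]
    have hD1 := hneg v h1
    have hD2 := hneg (v + 1) h2
    have key : (ind (-v) : ℤ) + jbar * (ind (-(v + 1)) : ℤ) - i * jbar =
        jbar * ((ind (v + 1) : ℤ) + j * (ind v : ℤ) - i)
        + ((ind (-v) : ℤ) - ((t : ℤ) + (ind v : ℤ)))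
        + jbar * ((ind (-(v + 1)) : ℤ) - ((t : ℤ) + (ind (v + 1) : ℤ)))
        + (1 + jbar) * (t : ℤ) + (j * jbar - 1) * (-(ind v : ℤ)) := by ring
    rw [key]
    exact dvd_add (dvd_add (dvd_add (dvd_add (h3.mul_left jbar) hD1) (hD2.mul_left jbar)) hGjb)
      (hE.mul_right _)
  · intro a _; ring
  · intro a _; ring
end

section
/- Let e ≥ 2 be an integer with q ≡ 1 (mod e). Then for every integer j, χ_e^j(−1)·χ_e(−1)·J_e(1,j) = Σ_{i=0}^{e−1} B_e(i,j)·ζ_e^i. -/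
open Finset
open scoped Classical

lemma zetaC_ne_zero (e : ℕ) : zetaC e ≠ 0 := Complex.exp_ne_zero _

lemma zetaC_pow_self (e : ℕ) (he : 0 < e) : zetaC e ^ e = 1 := by
  rw [zetaC, ← Complex.exp_nat_mul]
  have hne : (e : ℂ) ≠ 0 := Nat.cast_ne_zero.mpr he.ne'
  have h2 : (e : ℂ) * (2 * ↑Real.pi * Complex.I / (e : ℂ)) = 2 * ↑Real.pi * Complex.I := by
    field_simp
  rw [h2, Complex.exp_two_pi_mul_I]

lemma zetaC_zpow_congr (e : ℕ) (he : 0 < e) {a b : ℤ} (h : (e : ℤ) ∣ a - b) :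
    zetaC e ^ a = zetaC e ^ b := by
  obtain ⟨c, hc⟩ := h
  have ha : a = b + (e : ℤ) * c := by linarith
  rw [ha, zpow_add₀ (zetaC_ne_zero e), zpow_mul]
  have h1 : zetaC e ^ ((e : ℕ) : ℤ) = 1 := by
    rw [zpow_natCast, zetaC_pow_self e he]
  rw [h1, one_zpow, mul_one]

lemma sum_ite_dvd (e : ℕ) (he : 0 < e) (a : ℤ) (g : ℕ → ℂ) :
    ∑ i ∈ Finset.range e, (if (e : ℤ) ∣ (a - (i : ℤ)) then g i else 0)
      = g (a % (e : ℤ)).toNat := by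
  have he' : (0 : ℤ) < e := by exact_mod_cast he
  have h2 : 0 ≤ a % (e : ℤ) := Int.emod_nonneg a he'.ne'
  have h1 : a % (e : ℤ) < e := Int.emod_lt_of_pos a he'
  have hmem : (a % (e : ℤ)).toNat ∈ Finset.range e := by
    rw [Finset.mem_range]; omega
  rw [Finset.sum_eq_single_of_mem _ hmem]
  · rw [if_pos]
    rw [Int.toNat_of_nonneg h2, Int.emod_def]
    exact ⟨a / e, by ring⟩
  · intro i hi hne
    rw [if_neg]
    intro hdvd
    apply hne
    have hm : (i : ℤ) % (e : ℤ) = a % (e : ℤ) := Int.modEq_iff_dvd.mpr hdvd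
    have hi' : (i : ℤ) < e := by exact_mod_cast Finset.mem_range.mp hi
    have hie : (i : ℤ) % (e : ℤ) = i := Int.emod_eq_of_lt (by positivity) hi'
    omega

theorem jacobiSum_eq_dicksonHurwitz_sum {F : Type*} [Field F] [Fintype F]
    (p r : ℕ) (hp : p.Prime) (hr : 0 < r) (hcard : Fintype.card F = p ^ r)
    (γ : Fˣ) (hγ : ∀ x : Fˣ, ∃ k : ℕ, γ ^ k = x)
    (ind : F → ℕ) (hind : ∀ x : F, x ≠ 0 → (γ : F) ^ ind x = x)
    (e : ℕ) (he : 2 ≤ e) (hqe : Fintype.card F % e = 1) :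
    ∀ j : ℤ, chiPow e ind j (-1) * chiPow e ind 1 (-1) * jacobiSumInd e ind 1 j =
      ∑ i ∈ Finset.range e, (dicksonHurwitz e ind (i : ℤ) j : ℂ) * zetaC e ^ i := by
  intro j
  have he0 : 0 < e := by omega
  have hzne := zetaC_ne_zero e
  have hn1 : (-1 : F) ≠ 0 := neg_ne_zero.mpr one_ne_zero
  -- order of γ
  have hγmem : ∀ x : Fˣ, x ∈ Subgroup.zpowers γ := by
    intro x
    obtain ⟨k, hk⟩ := hγ x
    exact ⟨(k : ℤ), by simpa using hk⟩
  have hord : orderOf γ = Fintype.card F - 1 := by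
    rw [orderOf_eq_card_of_forall_mem_zpowers hγmem, Nat.card_eq_fintype_card, Fintype.card_units]
  have hedvd : e ∣ Fintype.card F - 1 := by
    have h1 := Nat.div_add_mod (Fintype.card F) e
    exact ⟨Fintype.card F / e, by omega⟩
  have heord : (e : ℤ) ∣ (orderOf γ : ℤ) := by
    rw [hord]; exact_mod_cast hedvd
  have hmul : ∀ x y : F, x ≠ 0 → y ≠ 0 →
      (e : ℤ) ∣ ((ind (x * y) : ℤ) - ((ind x : ℤ) + (ind y : ℤ))) := by
    intro x y hx hy
    have h1 : (γ : F) ^ (ind (x * y)) = (γ : F) ^ (ind x + ind y) := by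
      rw [pow_add, hind _ (mul_ne_zero hx hy), hind _ hx, hind _ hy]
    have h2 : γ ^ (ind (x * y)) = γ ^ (ind x + ind y) := Units.ext (by simpa using h1)
    have h3 : ind (x * y) ≡ ind x + ind y [MOD orderOf γ] := pow_eq_pow_iff_modEq.mp h2
    have h4 : ((orderOf γ : ℕ) : ℤ) ∣ ((ind x + ind y : ℕ) : ℤ) - (ind (x * y) : ℤ) := h3.dvd
    obtain ⟨c, hc⟩ := dvd_trans heord h4
    exact ⟨-c, by push_cast at hc ⊢; linarith⟩
  -- LHS computation
  have hLHS : chiPow e ind j (-1) * chiPow e ind 1 (-1) * jacobiSumInd e ind 1 j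
      = ∑ v ∈ Finset.univ.filter (fun v : F => v ≠ 0 ∧ v + 1 ≠ 0),
          zetaC e ^ (j * (ind (-1 : F) : ℤ) + (ind (-1 : F) : ℤ) + (ind v : ℤ)
            + j * (ind (v + 1) : ℤ)) := by
    rw [jacobiSumInd, Finset.mul_sum]
    have hzero : ∀ x ∈ (Finset.univ : Finset F),
        x ∉ Finset.univ.filter (fun v : F => v ≠ 0 ∧ v + 1 ≠ 0) →
        chiPow e ind j (-1) * chiPow e ind 1 (-1)
          * (chiPow e ind 1 x * chiPow e ind j (x + 1)) = 0 := by
      intro x _ hx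
      rw [Finset.mem_filter] at hx
      push_neg at hx
      by_cases h0 : x = 0
      · simp [chiPow, h0]
      · have h1 : x + 1 = 0 := hx (Finset.mem_univ x) h0
        simp [chiPow, h1]
    rw [← Finset.sum_subset (Finset.filter_subset _ Finset.univ) hzero]
    refine Finset.sum_congr rfl fun v hv => ?_
    rw [Finset.mem_filter] at hv
    obtain ⟨-, hv0, hv1⟩ := hv
    rw [chiPow, chiPow, chiPow, chiPow, if_neg hn1, if_neg hn1, if_neg hv0, if_neg hv1]
    simp only [← zpow_add₀ hzne]
    congr 1
    ring
  -- reindexing v ↦ -1 - v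
  have hbij : ∑ v ∈ Finset.univ.filter (fun v : F => v ≠ 0 ∧ v + 1 ≠ 0),
        zetaC e ^ (j * (ind (-1 : F) : ℤ) + (ind (-1 : F) : ℤ) + (ind v : ℤ)
          + j * (ind (v + 1) : ℤ))
      = ∑ v ∈ Finset.univ.filter (fun v : F => v ≠ 0 ∧ v + 1 ≠ 0),
          zetaC e ^ (j * (ind v : ℤ) + (ind (v + 1) : ℤ)) := by
    refine Finset.sum_equiv (Equiv.subLeft (-1 : F)) ?_ ?_
    · intro v
      simp only [Finset.mem_filter, Finset.mem_univ, true_and, Equiv.subLeft_apply]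
      constructor
      · rintro ⟨h1, h2⟩
        refine ⟨fun hc => h2 ?_, fun hc => h1 ?_⟩
        · linear_combination -hc
        · linear_combination -hc
      · rintro ⟨h1, h2⟩
        refine ⟨fun hc => h2 ?_, fun hc => h1 ?_⟩
        · linear_combination -hc
        · linear_combination -hc
    · intro v hv
      rw [Finset.mem_filter] at hv
      obtain ⟨-, hv0, hv1⟩ := hv
      simp only [Equiv.subLeft_apply]
      have e1 : (-1 : F) - v + 1 = -v := by ring
      rw [e1]
      have d1 : (e : ℤ) ∣ ((ind ((-1 : F) - v) : ℤ) - ((ind (-1 : F) : ℤ) + (ind (v + 1) : ℤ))) := by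
        have h := hmul (-1) (v + 1) hn1 hv1
        rwa [show (-1 : F) * (v + 1) = -1 - v from by ring] at h
      have d2 : (e : ℤ) ∣ ((ind (-v) : ℤ) - ((ind (-1 : F) : ℤ) + (ind v : ℤ))) := by
        have h := hmul (-1) v hn1 hv0
        rwa [show (-1 : F) * v = -v from by ring] at h
      apply zetaC_zpow_congr e he0
      obtain ⟨A, hA⟩ := d1
      obtain ⟨B, hB⟩ := d2
      exact ⟨-(j * A) - B, by linear_combination (-j) * hA - hB⟩
  -- RHS computation
  have hcyc : ∀ a b : ℤ, cycNum e ind a b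
      = (Finset.univ.filter (fun v : F => v ≠ 0 ∧ v + 1 ≠ 0 ∧
          (e : ℤ) ∣ ((ind v : ℤ) - a) ∧ (e : ℤ) ∣ ((ind (v + 1) : ℤ) - b))).card := by
    intro a b
    rw [cycNum, Nat.card_eq_fintype_card, Fintype.card_subtype]
  have step1 : ∀ i h : ℕ, ((cycNum e ind (h : ℤ) ((i : ℤ) - j * (h : ℤ)) : ℕ) : ℂ) * zetaC e ^ i
      = ∑ v : F, (if (v ≠ 0 ∧ v + 1 ≠ 0 ∧ (e : ℤ) ∣ ((ind v : ℤ) - (h : ℤ)) ∧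
          (e : ℤ) ∣ ((ind (v + 1) : ℤ) - ((i : ℤ) - j * (h : ℤ)))) then zetaC e ^ i else 0) := by
    intro i h
    rw [hcyc, ← Finset.sum_filter, Finset.sum_const, nsmul_eq_mul]
  have hRHS : ∑ i ∈ Finset.range e, (dicksonHurwitz e ind (i : ℤ) j : ℂ) * zetaC e ^ i
      = ∑ v ∈ Finset.univ.filter (fun v : F => v ≠ 0 ∧ v + 1 ≠ 0),
          zetaC e ^ (j * (ind v : ℤ) + (ind (v + 1) : ℤ)) := by
    calc ∑ i ∈ Finset.range e, (dicksonHurwitz e ind (i : ℤ) j : ℂ) * zetaC e ^ i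
        = ∑ i ∈ Finset.range e, ∑ h ∈ Finset.range e, ∑ v : F,
            (if (v ≠ 0 ∧ v + 1 ≠ 0 ∧ (e : ℤ) ∣ ((ind v : ℤ) - (h : ℤ)) ∧
              (e : ℤ) ∣ ((ind (v + 1) : ℤ) - ((i : ℤ) - j * (h : ℤ)))) then zetaC e ^ i else 0) := by
          refine Finset.sum_congr rfl fun i _ => ?_
          rw [dicksonHurwitz, Nat.cast_sum, Finset.sum_mul]
          exact Finset.sum_congr rfl fun h _ => step1 i h
      _ = ∑ i ∈ Finset.range e, ∑ v : F, ∑ h ∈ Finset.range e,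
            (if (v ≠ 0 ∧ v + 1 ≠ 0 ∧ (e : ℤ) ∣ ((ind v : ℤ) - (h : ℤ)) ∧
              (e : ℤ) ∣ ((ind (v + 1) : ℤ) - ((i : ℤ) - j * (h : ℤ)))) then zetaC e ^ i else 0) :=
          Finset.sum_congr rfl fun i _ => Finset.sum_comm
      _ = ∑ v : F, ∑ i ∈ Finset.range e, ∑ h ∈ Finset.range e,
            (if (v ≠ 0 ∧ v + 1 ≠ 0 ∧ (e : ℤ) ∣ ((ind v : ℤ) - (h : ℤ)) ∧
              (e : ℤ) ∣ ((ind (v + 1) : ℤ) - ((i : ℤ) - j * (h : ℤ)))) then zetaC e ^ i else 0) :=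
          Finset.sum_comm
      _ = ∑ v : F, ∑ h ∈ Finset.range e, ∑ i ∈ Finset.range e,
            (if (v ≠ 0 ∧ v + 1 ≠ 0 ∧ (e : ℤ) ∣ ((ind v : ℤ) - (h : ℤ)) ∧
              (e : ℤ) ∣ ((ind (v + 1) : ℤ) - ((i : ℤ) - j * (h : ℤ)))) then zetaC e ^ i else 0) :=
          Finset.sum_congr rfl fun v _ => Finset.sum_comm
      _ = ∑ v ∈ Finset.univ.filter (fun v : F => v ≠ 0 ∧ v + 1 ≠ 0),
            zetaC e ^ (j * (ind v : ℤ) + (ind (v + 1) : ℤ)) := by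
          rw [Finset.sum_filter]
          refine Finset.sum_congr rfl fun v _ => ?_
          by_cases hv : v ≠ 0 ∧ v + 1 ≠ 0
          · obtain ⟨hv0, hv1⟩ := hv
            rw [if_pos ⟨hv0, hv1⟩]
            have hsimp : ∀ (i h : ℕ),
                ((v ≠ 0 ∧ v + 1 ≠ 0 ∧ (e : ℤ) ∣ ((ind v : ℤ) - (h : ℤ)) ∧
                  (e : ℤ) ∣ ((ind (v + 1) : ℤ) - ((i : ℤ) - j * (h : ℤ)))) : Prop)
                = ((e : ℤ) ∣ ((ind v : ℤ) - (h : ℤ)) ∧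
                  (e : ℤ) ∣ ((ind (v + 1) : ℤ) - ((i : ℤ) - j * (h : ℤ)))) := fun i h =>
              propext ⟨fun ⟨_, _, a, b⟩ => ⟨a, b⟩, fun ⟨a, b⟩ => ⟨hv0, hv1, a, b⟩⟩
            simp only [hsimp]
            have inner : ∀ h : ℕ,
                (∑ i ∈ Finset.range e, if ((e : ℤ) ∣ ((ind v : ℤ) - (h : ℤ)) ∧
                    (e : ℤ) ∣ ((ind (v + 1) : ℤ) - ((i : ℤ) - j * (h : ℤ)))) then zetaC e ^ i else 0)
                = if (e : ℤ) ∣ ((ind v : ℤ) - (h : ℤ)) then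
                    zetaC e ^ ((((ind (v + 1) : ℤ) + j * (h : ℤ)) % (e : ℤ)).toNat) else 0 := by
              intro h
              by_cases hD : (e : ℤ) ∣ ((ind v : ℤ) - (h : ℤ))
              · rw [if_pos hD]
                have hc2 : ∀ i : ℕ,
                    (((e : ℤ) ∣ ((ind v : ℤ) - (h : ℤ)) ∧
                      (e : ℤ) ∣ ((ind (v + 1) : ℤ) - ((i : ℤ) - j * (h : ℤ)))) : Prop)
                    = ((e : ℤ) ∣ ((((ind (v + 1) : ℤ) + j * (h : ℤ))) - (i : ℤ))) := fun i => by
                  rw [show (ind (v + 1) : ℤ) - ((i : ℤ) - j * (h : ℤ))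
                      = ((ind (v + 1) : ℤ) + j * (h : ℤ)) - (i : ℤ) from by ring]
                  exact propext ⟨fun ⟨_, x⟩ => x, fun x => ⟨hD, x⟩⟩
                simp only [hc2]
                exact sum_ite_dvd e he0 _ (fun n => zetaC e ^ n)
              · rw [if_neg hD]
                exact Finset.sum_eq_zero fun i _ => if_neg (fun hc => hD hc.1)
            simp only [inner]
            rw [sum_ite_dvd e he0 ((ind v : ℤ))
              (fun h => zetaC e ^ ((((ind (v + 1) : ℤ) + j * (h : ℤ)) % (e : ℤ)).toNat))]
            -- final exponent identity
            have hx2 : ((((ind v : ℤ) % (e : ℤ)).toNat : ℕ) : ℤ) = (ind v : ℤ) % (e : ℤ) :=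
              Int.toNat_of_nonneg (Int.emod_nonneg _ (by exact_mod_cast he0.ne'))
            rw [hx2]
            rw [← zpow_natCast (zetaC e)]
            apply zetaC_zpow_congr e he0
            rw [Int.toNat_of_nonneg (Int.emod_nonneg _ (by exact_mod_cast he0.ne'))]
            have m1 : ((ind v : ℤ) % (e : ℤ)) ≡ (ind v : ℤ) [ZMOD (e : ℤ)] :=
              Int.emod_emod_of_dvd _ dvd_rfl
            have m2 : (((ind (v + 1) : ℤ) + j * ((ind v : ℤ) % (e : ℤ))) % (e : ℤ))
                ≡ ((ind (v + 1) : ℤ) + j * ((ind v : ℤ) % (e : ℤ))) [ZMOD (e : ℤ)] :=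
              Int.emod_emod_of_dvd _ dvd_rfl
            have m3 : ((ind (v + 1) : ℤ) + j * ((ind v : ℤ) % (e : ℤ)))
                ≡ (ind (v + 1) : ℤ) + j * (ind v : ℤ) [ZMOD (e : ℤ)] :=
              Int.ModEq.add_left _ (Int.ModEq.mul_left j m1)
            obtain ⟨c, hc⟩ := (m2.trans m3).dvd
            exact ⟨-c, by linear_combination -hc⟩
          · rw [if_neg hv]
            exact Finset.sum_eq_zero fun h _ => Finset.sum_eq_zero fun i _ =>
              if_neg (fun hc => hv ⟨hc.1, hc.2.1⟩)
  rw [hLHS, hbij, hRHS]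
end

section
/- Let l be an odd prime with q ≡ 1 (mod l²). Then for every integer n with 1 ≤ n ≤ l²−1, J_{l²}(1,n) = Σ_{i=0}^{l(l−1)−1} b_{i,n}·ζ_{l²}^i, where b_{i,n} = B_{l²}(i,n) − B_{l²}(l(l−1)+j, n) and j is the unique integer with 0 ≤ j ≤ l−1 and j ≡ i (mod l). -/
open Finset
open scoped Classical

lemma zpow_congr_mod {ζ : ℂ} (hζ : ζ ≠ 0) {e : ℕ} (h1 : ζ ^ (e : ℤ) = 1)
    {x y : ℤ} (h : (e : ℤ) ∣ x - y) : ζ ^ x = ζ ^ y := by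
  obtain ⟨c, hc⟩ := h
  have hx : x = y + (e : ℤ) * c := by linarith
  rw [hx, zpow_add₀ hζ, zpow_mul, h1, one_zpow, mul_one]

lemma dvd_sub_iff_mod_eq {e m a : ℕ} (ha : a < e) :
    (e : ℤ) ∣ (m : ℤ) - (a : ℤ) ↔ m % e = a := by
  rw [← Nat.modEq_iff_dvd, Nat.ModEq, Nat.mod_eq_of_lt ha]
  exact eq_comm

lemma cycNum_eq_card_filter {F : Type*} [Field F] [Fintype F] (e : ℕ) (ind : F → ℕ) (a b : ℤ) :
    cycNum e ind a b = (Finset.univ.filter (fun v : F => v ≠ 0 ∧ v + 1 ≠ 0 ∧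
      (e : ℤ) ∣ ((ind v : ℤ) - a) ∧ (e : ℤ) ∣ ((ind (v + 1) : ℤ) - b))).card := by
  rw [cycNum, Nat.card_eq_fintype_card, Fintype.card_subtype]

lemma cycNum_congr {F : Type*} [Field F] [Fintype F] (e : ℕ) (ind : F → ℕ)
    {a a' b b' : ℤ} (h1 : (e : ℤ) ∣ a - a') (h2 : (e : ℤ) ∣ b - b') :
    cycNum e ind a b = cycNum e ind a' b' := by
  apply Nat.card_congr
  apply Equiv.subtypeEquivRight
  intro v
  have key : ∀ x c c' : ℤ, (e : ℤ) ∣ c - c' → ((e:ℤ) ∣ x - c ↔ (e:ℤ) ∣ x - c') := by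
    intro x c c' hd
    constructor
    · intro h; have := dvd_add h hd; simpa using this
    · intro h; have := dvd_sub h hd; simpa using this
  rw [key _ _ _ h1, key _ _ _ h2]

lemma cycNum_symm {F : Type*} [Field F] [Fintype F] (e : ℕ) (ind : F → ℕ)
    (hneg : ∀ x : F, x ≠ 0 → (e : ℤ) ∣ ((ind (-x) : ℤ) - (ind x : ℤ)))
    (a b : ℤ) : cycNum e ind a b = cycNum e ind b a := by
  apply Nat.card_congr
  have key : ∀ (a b : ℤ) (v : F), v ≠ 0 ∧ v + 1 ≠ 0 ∧ (e : ℤ) ∣ ((ind v : ℤ) - a) ∧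
      (e : ℤ) ∣ ((ind (v + 1) : ℤ) - b) →
      (-1 - v ≠ 0 ∧ (-1 - v) + 1 ≠ 0 ∧ (e : ℤ) ∣ ((ind (-1 - v) : ℤ) - b) ∧
      (e : ℤ) ∣ ((ind ((-1 - v) + 1) : ℤ) - a)) := by
    rintro a b v ⟨h0, h1, hda, hdb⟩
    have e1 : (-1 : F) - v = -(v + 1) := by ring
    have e2 : (-1 : F) - v + 1 = -v := by ring
    refine ⟨by rw [e1]; exact neg_ne_zero.2 h1, by rw [e2]; exact neg_ne_zero.2 h0, ?_, ?_⟩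
    · rw [e1]
      have := hneg (v + 1) h1
      have := dvd_add this hdb
      simpa using this
    · rw [e2]
      have := hneg v h0
      have := dvd_add this hda
      simpa using this
  refine ⟨fun v => ⟨-1 - v.1, key a b v.1 v.2⟩, fun w => ⟨-1 - w.1, key b a w.1 w.2⟩, ?_, ?_⟩ <;>
    (intro v; apply Subtype.ext; simp only; ring)

lemma emod_sub_self_dvd (e : ℕ) (x : ℤ) : (e : ℤ) ∣ x - x % (e : ℤ) := by
  have h := Int.mul_ediv_add_emod x (e : ℤ)
  exact ⟨x / (e : ℤ), by linarith⟩

lemma jacobi_eq_sum_dh {F : Type*} [Field F] [Fintype F] (e : ℕ) (he : 0 < e) (ind : F → ℕ)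
    (hsym : ∀ a b : ℤ, cycNum e ind a b = cycNum e ind b a) (n : ℤ) :
    jacobiSumInd e ind 1 n =
      ∑ h ∈ Finset.range e, (dicksonHurwitz e ind (h : ℤ) n : ℂ) * zetaC e ^ h := by
  set ζ := zetaC e with hζdef
  have hζ0 : ζ ≠ 0 := Complex.exp_ne_zero _
  have hζe : ζ ^ (e : ℤ) = 1 := by
    have h1 : ζ ^ e = 1 := (Complex.isPrimitiveRoot_exp e he.ne').pow_eq_one
    rw [zpow_natCast]; exact h1
  set S : Finset F := Finset.univ.filter (fun v : F => v ≠ 0 ∧ v + 1 ≠ 0) with hS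
  set g : F → ℂ := fun v => ζ ^ ((ind v : ℤ) + n * (ind (v + 1) : ℤ)) with hg
  -- Step 1 : Jacobi sum as a sum over S
  have hJ : jacobiSumInd e ind 1 n = ∑ v ∈ S, g v := by
    have hterm : ∀ v : F, chiPow e ind 1 v * chiPow e ind n (v + 1) =
        if v ≠ 0 ∧ v + 1 ≠ 0 then g v else 0 := by
      intro v
      unfold chiPow
      by_cases h0 : v = 0 <;> by_cases h1 : v + 1 = 0 <;>
        simp [h0, h1, hg, zpow_add₀ hζ0, one_mul] <;> rfl
    calc jacobiSumInd e ind 1 n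
        = ∑ v : F, if v ≠ 0 ∧ v + 1 ≠ 0 then g v else 0 :=
          Finset.sum_congr rfl (fun v _ => hterm v)
      _ = ∑ v ∈ S, g v := (Finset.sum_filter _ _).symm
  -- Step 2 : fiberwise
  have hfib : ∑ v ∈ S, g v = ∑ q ∈ Finset.range e ×ˢ Finset.range e,
      ∑ v ∈ S.filter (fun v => (ind v % e, ind (v + 1) % e) = q), g v :=
    (Finset.sum_fiberwise_of_maps_to (fun v _ => by
        simp [Finset.mem_product, Nat.mod_lt _ he]) g).symm
  -- Step 3 : inner sums
  have hinner : ∀ q ∈ Finset.range e ×ˢ Finset.range e,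
      ∑ v ∈ S.filter (fun v => (ind v % e, ind (v + 1) % e) = q), g v
        = (cycNum e ind (q.1 : ℤ) (q.2 : ℤ) : ℂ) * ζ ^ ((q.1 : ℤ) + n * (q.2 : ℤ)) := by
    rintro ⟨a, b⟩ hq
    simp only [Finset.mem_product, Finset.mem_range] at hq
    have hterm : ∀ v ∈ S.filter (fun v => (ind v % e, ind (v + 1) % e) = (a, b)),
        g v = ζ ^ ((a : ℤ) + n * (b : ℤ)) := by
      intro v hv
      simp only [hS, Finset.mem_filter, Finset.mem_univ, true_and, Prod.mk.injEq] at hv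
      obtain ⟨-, hva, hvb⟩ := hv
      apply zpow_congr_mod hζ0 hζe
      have d1 : (e : ℤ) ∣ (ind v : ℤ) - a := (dvd_sub_iff_mod_eq hq.1).2 hva
      have d2 : (e : ℤ) ∣ (ind (v + 1) : ℤ) - b := (dvd_sub_iff_mod_eq hq.2).2 hvb
      have hr : (ind v : ℤ) + n * (ind (v + 1) : ℤ) - ((a : ℤ) + n * b)
          = ((ind v : ℤ) - a) + n * ((ind (v + 1) : ℤ) - b) := by ring
      rw [hr]
      exact dvd_add d1 (Dvd.dvd.mul_left d2 n)
    rw [Finset.sum_congr rfl hterm, Finset.sum_const, nsmul_eq_mul]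
    congr 1
    norm_cast
    have hsets : S.filter (fun v => (ind v % e, ind (v + 1) % e) = (a, b)) =
        Finset.univ.filter (fun v : F => v ≠ 0 ∧ v + 1 ≠ 0 ∧
          (e : ℤ) ∣ ((ind v : ℤ) - (a : ℤ)) ∧ (e : ℤ) ∣ ((ind (v + 1) : ℤ) - (b : ℤ))) := by
      ext v
      simp only [hS, Finset.mem_filter, Finset.mem_univ, true_and, Prod.mk.injEq]
      constructor
      · rintro ⟨⟨h0, h1⟩, ha, hb⟩
        exact ⟨h0, h1, (dvd_sub_iff_mod_eq hq.1).2 ha, (dvd_sub_iff_mod_eq hq.2).2 hb⟩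
      · rintro ⟨h0, h1, ha, hb⟩
        exact ⟨⟨h0, h1⟩, (dvd_sub_iff_mod_eq hq.1).1 ha, (dvd_sub_iff_mod_eq hq.2).1 hb⟩
    rw [hsets, ← cycNum_eq_card_filter]
  -- Step 4 : double sum form
  have hJ2 : jacobiSumInd e ind 1 n = ∑ a ∈ Finset.range e, ∑ b ∈ Finset.range e,
      (cycNum e ind (a : ℤ) (b : ℤ) : ℂ) * ζ ^ ((a : ℤ) + n * (b : ℤ)) := by
    rw [hJ, hfib, Finset.sum_congr rfl hinner, Finset.sum_product]
  -- Step 5 : swap via symmetry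
  have hswap : ∑ a ∈ Finset.range e, ∑ b ∈ Finset.range e,
      (cycNum e ind (a : ℤ) (b : ℤ) : ℂ) * ζ ^ ((a : ℤ) + n * (b : ℤ))
      = ∑ a ∈ Finset.range e, ∑ b ∈ Finset.range e,
      (cycNum e ind (a : ℤ) (b : ℤ) : ℂ) * ζ ^ ((b : ℤ) + n * (a : ℤ)) := by
    rw [Finset.sum_comm]
    refine Finset.sum_congr rfl fun a _ => Finset.sum_congr rfl fun b _ => ?_
    rw [hsym]
  -- Step 6 : RHS transformation
  have hRe : ∑ h ∈ Finset.range e, (dicksonHurwitz e ind (h : ℤ) n : ℂ) * ζ ^ h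
      = ∑ a ∈ Finset.range e, ∑ b ∈ Finset.range e,
        (cycNum e ind (a : ℤ) (b : ℤ) : ℂ) * ζ ^ ((b : ℤ) + n * (a : ℤ)) := by
    have hexp : ∀ h ∈ Finset.range e, (dicksonHurwitz e ind (h : ℤ) n : ℂ) * ζ ^ h
        = ∑ a ∈ Finset.range e, (cycNum e ind (a : ℤ) ((h : ℤ) - n * a) : ℂ) * ζ ^ h := by
      intro h _
      rw [dicksonHurwitz, Nat.cast_sum, Finset.sum_mul]
    rw [Finset.sum_congr rfl hexp, Finset.sum_comm]
    refine Finset.sum_congr rfl fun a _ => ?_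
    have hene : (e : ℤ) ≠ 0 := by exact_mod_cast he.ne'
    have hepos : (0 : ℤ) < (e : ℤ) := by exact_mod_cast he
    refine Finset.sum_bij' (i := fun h _ => ((((h : ℤ) - n * a) % (e : ℤ)).toNat))
      (j := fun b _ => ((((b : ℤ) + n * a) % (e : ℤ)).toNat)) ?_ ?_ ?_ ?_ ?_
    · intro h _
      have h1 := Int.emod_nonneg ((h : ℤ) - n * a) hene
      have h2 := Int.emod_lt_of_pos ((h : ℤ) - n * a) hepos
      simp only [Finset.mem_range]
      omega
    · intro b _
      have h1 := Int.emod_nonneg ((b : ℤ) + n * a) hene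
      have h2 := Int.emod_lt_of_pos ((b : ℤ) + n * a) hepos
      simp only [Finset.mem_range]
      omega
    · intro h hh
      simp only [Finset.mem_range] at hh
      have h1 := Int.emod_nonneg ((h : ℤ) - n * a) hene
      beta_reduce
      rw [Int.toNat_of_nonneg h1, Int.emod_add_emod, sub_add_cancel,
        Int.emod_eq_of_lt (by positivity) (by exact_mod_cast hh)]
      exact Int.toNat_natCast h
    · intro b hb
      simp only [Finset.mem_range] at hb
      have h1 := Int.emod_nonneg ((b : ℤ) + n * a) hene
      beta_reduce
      rw [Int.toNat_of_nonneg h1, Int.sub_emod, Int.emod_emod_of_dvd _ dvd_rfl,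
        ← Int.sub_emod, add_sub_cancel_right,
        Int.emod_eq_of_lt (by positivity) (by exact_mod_cast hb)]
      exact Int.toNat_natCast b
    · intro h hh
      have h1 := Int.emod_nonneg ((h : ℤ) - n * a) hene
      have hbz : (((((h : ℤ) - n * a) % (e : ℤ)).toNat : ℕ) : ℤ)
          = ((h : ℤ) - n * a) % (e : ℤ) := Int.toNat_of_nonneg h1
      have hd : (e : ℤ) ∣ ((h : ℤ) - n * a) - ((h : ℤ) - n * a) % (e : ℤ) :=
        emod_sub_self_dvd e _
      congr 1
      · have hc := cycNum_congr e ind (a := (a : ℤ)) (a' := (a : ℤ))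
          (b := (h : ℤ) - n * a) (b' := ((((h : ℤ) - n * a) % (e : ℤ)).toNat : ℤ))
          (by simp) (by rw [hbz]; exact hd)
        exact_mod_cast hc
      · rw [← zpow_natCast ζ h]
        apply zpow_congr_mod hζ0 hζe
        rw [hbz]
        have hr : (h : ℤ) - (((h : ℤ) - n * a) % (e : ℤ) + n * a)
            = ((h : ℤ) - n * a) - ((h : ℤ) - n * a) % (e : ℤ) := by ring
        rw [hr]; exact hd
  rw [hJ2, hswap]
  exact hRe.symm

theorem jacobiSum_lsq_eq_dicksonHurwitz {F : Type*} [Field F] [Fintype F]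
    (p r : ℕ) (hp : p.Prime) (hr : 0 < r) (hcard : Fintype.card F = p ^ r)
    (γ : Fˣ) (hγ : ∀ x : Fˣ, ∃ k : ℕ, γ ^ k = x)
    (ind : F → ℕ) (hind : ∀ x : F, x ≠ 0 → (γ : F) ^ ind x = x)
    (l : ℕ) (hl : l.Prime) (hlodd : Odd l) (hqe : Fintype.card F % l ^ 2 = 1)
    (n : ℤ) (hn1 : 1 ≤ n) (hn2 : n ≤ (l : ℤ) ^ 2 - 1) :
    jacobiSumInd (l ^ 2) ind 1 n =
      ∑ i ∈ Finset.range (l * (l - 1)),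
        (((dicksonHurwitz (l ^ 2) ind (i : ℤ) n : ℤ) -
          (dicksonHurwitz (l ^ 2) ind ((l * (l - 1) + i % l : ℕ) : ℤ) n : ℤ) : ℤ) : ℂ) *
          zetaC (l ^ 2) ^ i := by
  have hl2 : 2 ≤ l := hl.two_le
  have hlne2 : l ≠ 2 := by rintro rfl; exact (by decide : ¬ Odd 2) hlodd
  have hl3 : 3 ≤ l := by omega
  set e : ℕ := l ^ 2 with he_def
  have he : 0 < e := by positivity
  set q : ℕ := Fintype.card F with hq_def
  have hq0 : 0 < q := Fintype.card_pos
  have hq1 : e ∣ q - 1 := by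
    have := Nat.div_add_mod q e
    exact ⟨q / e, by omega⟩
  have horder : orderOf γ = q - 1 := by
    have h1 : orderOf γ = Nat.card Fˣ := orderOf_eq_card_of_forall_mem_zpowers (fun x => by
      obtain ⟨k, hk⟩ := hγ x
      exact Subgroup.mem_zpowers_iff.2 ⟨(k : ℤ), by rw [zpow_natCast]; exact hk⟩)
    rw [h1, Nat.card_eq_fintype_card, Fintype.card_units]
  obtain ⟨k, hk⟩ := hγ (-1)
  have h2k : (q - 1) ∣ 2 * k := by
    rw [← horder]
    apply orderOf_dvd_of_pow_eq_one
    rw [mul_comm, pow_mul, hk]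
    simp
  have hek : e ∣ k := by
    by_cases hm1 : (-1 : Fˣ) = 1
    · have hγk : γ ^ k = 1 := by rw [hk, hm1]
      exact dvd_trans hq1 (horder ▸ orderOf_dvd_of_pow_eq_one hγk)
    · have ho2 : orderOf (-1 : Fˣ) = 2 := by
        have hdvd : orderOf (-1 : Fˣ) ∣ 2 := orderOf_dvd_of_pow_eq_one (by simp)
        have hne : orderOf (-1 : Fˣ) ≠ 1 := by simp [orderOf_eq_one_iff, hm1]
        have hpos : 0 < orderOf (-1 : Fˣ) := orderOf_pos _
        have hle : orderOf (-1 : Fˣ) ≤ 2 := Nat.le_of_dvd (by norm_num) hdvd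
        omega
      have h2 : 2 ∣ q - 1 := by
        have hdc := orderOf_dvd_card (G := Fˣ) (x := -1)
        rw [Fintype.card_units, ho2] at hdc
        exact hdc
      obtain ⟨d, hd⟩ := h2
      have hdk : d ∣ k := by
        have h' : 2 * d ∣ 2 * k := hd ▸ h2k
        exact (mul_dvd_mul_iff_left (two_ne_zero)).1 h'
      have heodd : ¬ 2 ∣ e := by
        intro h2e
        have h2l : 2 ∣ l := Nat.Prime.dvd_of_dvd_pow Nat.prime_two h2e
        have := Nat.odd_iff.1 hlodd
        omega
      have hed : e ∣ d := by
        have he2d : e ∣ 2 * d := hd ▸ hq1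
        have hcop : Nat.Coprime e 2 :=
          Nat.coprime_comm.1 ((Nat.prime_two.coprime_iff_not_dvd).2 heodd)
        exact hcop.dvd_of_dvd_mul_left he2d
      exact dvd_trans hed hdk
  -- ind(-x) ≡ ind(x) mod e
  have hneg : ∀ x : F, x ≠ 0 → (e : ℤ) ∣ ((ind (-x) : ℕ) : ℤ) - ((ind x : ℕ) : ℤ) := by
    intro x hx
    have hx' : (-x : F) ≠ 0 := neg_ne_zero.2 hx
    have e1 : (γ : F) ^ ind (-x) = -x := hind _ hx'
    have e2 : (γ : F) ^ (k + ind x) = -x := by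
      rw [pow_add]
      have hγk : ((γ : F)) ^ k = ((γ ^ k : Fˣ) : F) := by rw [Units.val_pow_eq_pow_val]
      rw [hγk, hk, hind x hx]
      simp
    have e3 : γ ^ ind (-x) = γ ^ (k + ind x) := by
      apply Units.ext
      rw [Units.val_pow_eq_pow_val, Units.val_pow_eq_pow_val, e1, e2]
    have e4 : ind (-x) ≡ k + ind x [MOD q - 1] := by
      rw [← horder]
      exact pow_eq_pow_iff_modEq.1 e3
    have e5 : ((q - 1 : ℕ) : ℤ) ∣ ((k + ind x : ℕ) : ℤ) - ((ind (-x) : ℕ) : ℤ) :=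
      Nat.modEq_iff_dvd.1 e4
    have e6 : (e : ℤ) ∣ ((k + ind x : ℕ) : ℤ) - ((ind (-x) : ℕ) : ℤ) :=
      dvd_trans (Int.natCast_dvd_natCast.2 hq1) e5
    have e7 : (e : ℤ) ∣ (k : ℤ) := Int.natCast_dvd_natCast.2 hek
    have hr : ((ind (-x) : ℕ) : ℤ) - ((ind x : ℕ) : ℤ)
        = (k : ℤ) - (((k + ind x : ℕ) : ℤ) - ((ind (-x) : ℕ) : ℤ)) := by push_cast; ring
    rw [hr]
    exact dvd_sub e7 e6
  have hJ' := jacobi_eq_sum_dh e he ind (cycNum_symm e ind hneg) n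
  set ζ := zetaC e with hζdef
  have hprim : IsPrimitiveRoot ζ e := Complex.isPrimitiveRoot_exp e he.ne'
  have hprim2 : IsPrimitiveRoot (ζ ^ l) l := hprim.pow he (pow_two l)
  have hgeom : ∑ k ∈ Finset.range l, ζ ^ (l * k) = 0 := by
    have h0 := hprim2.geom_sum_eq_zero (by omega : 1 < l)
    calc ∑ k ∈ Finset.range l, ζ ^ (l * k)
        = ∑ k ∈ Finset.range l, (ζ ^ l) ^ k := by
          refine Finset.sum_congr rfl fun k _ => ?_
          rw [← pow_mul]
      _ = 0 := h0
  have h1l : l - 1 + 1 = l := by omega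
  have hz : ζ ^ (l * (l - 1)) = - ∑ k ∈ Finset.range (l - 1), ζ ^ (l * k) := by
    have hsplit : ∑ k ∈ Finset.range (l - 1 + 1), ζ ^ (l * k)
        = ∑ k ∈ Finset.range (l - 1), ζ ^ (l * k) + ζ ^ (l * (l - 1)) :=
      Finset.sum_range_succ _ _
    rw [h1l] at hsplit
    have h0 : ∑ k ∈ Finset.range (l - 1), ζ ^ (l * k) + ζ ^ (l * (l - 1)) = 0 := by
      rw [← hsplit]; exact hgeom
    exact eq_neg_of_add_eq_zero_right h0
  have hsq : e = l * (l - 1) + l := by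
    have h' : l * (l - 1) + l = l * (l - 1 + 1) := by ring
    rw [h', h1l, he_def, pow_two]
  rw [hJ']
  have hsum := Finset.sum_range_add
    (fun h => (dicksonHurwitz e ind (h : ℤ) n : ℂ) * ζ ^ h) (l * (l - 1)) l
  rw [← hsq] at hsum
  rw [hsum]
  have hsecond : ∑ t ∈ Finset.range l,
      (dicksonHurwitz e ind ((l * (l - 1) + t : ℕ) : ℤ) n : ℂ) * ζ ^ (l * (l - 1) + t)
      = - ∑ t ∈ Finset.range l, ∑ k ∈ Finset.range (l - 1),
          (dicksonHurwitz e ind ((l * (l - 1) + t : ℕ) : ℤ) n : ℂ) * ζ ^ (l * k + t) := by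
    rw [← Finset.sum_neg_distrib]
    refine Finset.sum_congr rfl fun t _ => ?_
    rw [pow_add, hz, neg_mul, mul_neg]
    refine congrArg Neg.neg ?_
    rw [Finset.sum_mul, Finset.mul_sum]
    refine Finset.sum_congr rfl fun kk _ => ?_
    rw [pow_add]
  have hreindex : ∑ t ∈ Finset.range l, ∑ k ∈ Finset.range (l - 1),
      (dicksonHurwitz e ind ((l * (l - 1) + t : ℕ) : ℤ) n : ℂ) * ζ ^ (l * k + t)
      = ∑ i ∈ Finset.range (l * (l - 1)),
        (dicksonHurwitz e ind ((l * (l - 1) + i % l : ℕ) : ℤ) n : ℂ) * ζ ^ i := by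
    rw [← Finset.sum_product']
    refine Finset.sum_nbij' (i := fun p : ℕ × ℕ => l * p.2 + p.1)
      (j := fun i => (i % l, i / l)) ?_ ?_ ?_ ?_ ?_
    · rintro ⟨t, k⟩ hp'
      simp only [Finset.mem_product, Finset.mem_range] at hp'
      simp only [Finset.mem_range]
      calc l * k + t < l * k + l := by omega
        _ = l * (k + 1) := by ring
        _ ≤ l * (l - 1) := Nat.mul_le_mul_left l (by omega)
    · intro i hi
      simp only [Finset.mem_range] at hi
      simp only [Finset.mem_product, Finset.mem_range]
      refine ⟨Nat.mod_lt _ (by omega), ?_⟩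
      rw [Nat.div_lt_iff_lt_mul (by omega : 0 < l)]
      calc i < l * (l - 1) := hi
        _ = (l - 1) * l := by ring
    · rintro ⟨t, k⟩ hp'
      simp only [Finset.mem_product, Finset.mem_range] at hp'
      have hm : (l * k + t) % l = t := by
        rw [Nat.mul_add_mod, Nat.mod_eq_of_lt hp'.1]
      have hd : (l * k + t) / l = k := by
        rw [Nat.mul_add_div (by omega : 0 < l), Nat.div_eq_of_lt hp'.1, add_zero]
      simp only [hm, hd]
    · intro i _
      simp only
      exact Nat.div_add_mod i l
    · rintro ⟨t, k⟩ hp'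
      simp only [Finset.mem_product, Finset.mem_range] at hp'
      have hm : (l * k + t) % l = t := by
        rw [Nat.mul_add_mod, Nat.mod_eq_of_lt hp'.1]
      simp only [hm]
  rw [hsecond, hreindex, ← sub_eq_add_neg, ← Finset.sum_sub_distrib]
  refine Finset.sum_congr rfl fun i _ => ?_
  push_cast
  ring
end

section
/- Let l > 3 be a prime with q ≡ 1 (mod l²), and let n be an integer with 1 ≤ n ≤ l²−1 and l | n. Then J_{l²}(1,n) ≡ −1 (mod (1−ζ_{l²})^{l+1}). -/
open Finset
open scoped Classical

/-- Divisibility by `(1-ζ)^k` with witness in `ℤ[ζ]`. -/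
def Dv (ζ : ℂ) (k : ℕ) (a : ℂ) : Prop :=
  ∃ c ∈ Algebra.adjoin ℤ ({ζ} : Set ℂ), a = (1 - ζ) ^ k * c

lemma Dv.add {ζ : ℂ} {k : ℕ} {a b : ℂ} (ha : Dv ζ k a) (hb : Dv ζ k b) : Dv ζ k (a + b) := by
  obtain ⟨c, hc, rfl⟩ := ha; obtain ⟨d, hd, rfl⟩ := hb
  exact ⟨c + d, Subalgebra.add_mem _ hc hd, by ring⟩

lemma Dv.mul {ζ : ℂ} {k j : ℕ} {a b : ℂ} (ha : Dv ζ k a) (hb : Dv ζ j b) :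
    Dv ζ (k + j) (a * b) := by
  obtain ⟨c, hc, rfl⟩ := ha; obtain ⟨d, hd, rfl⟩ := hb
  exact ⟨c * d, Subalgebra.mul_mem _ hc hd, by ring⟩

lemma Dv.of_mem {ζ : ℂ} {a : ℂ} (h : a ∈ Algebra.adjoin ℤ ({ζ} : Set ℂ)) : Dv ζ 0 a :=
  ⟨a, h, by ring⟩

lemma Dv.mono {ζ : ℂ} {k j : ℕ} {a : ℂ} (ha : Dv ζ k a) (hj : j ≤ k) : Dv ζ j a := by
  obtain ⟨c, hc, rfl⟩ := ha
  refine ⟨(1 - ζ) ^ (k - j) * c, Subalgebra.mul_mem _ (Subalgebra.pow_mem _ ?_ _) hc, ?_⟩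
  · exact Subalgebra.sub_mem _ (Subalgebra.one_mem _) (Algebra.self_mem_adjoin_singleton ℤ ζ)
  · rw [← mul_assoc, ← pow_add, Nat.add_sub_cancel' hj]

lemma Dv.sum {ζ : ℂ} {k : ℕ} {ι : Type*} {s : Finset ι} {f : ι → ℂ}
    (h : ∀ i ∈ s, Dv ζ k (f i)) : Dv ζ k (∑ i ∈ s, f i) := by
  classical
  induction s using Finset.induction_on with
  | empty => exact ⟨0, Subalgebra.zero_mem _, by simp⟩
  | insert _ _ hx ih =>
      rw [Finset.sum_insert hx]
      exact (h _ (Finset.mem_insert_self _ _)).add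
        (ih fun i hi => h i (Finset.mem_insert_of_mem hi))

lemma Dv.neg {ζ : ℂ} {k : ℕ} {a : ℂ} (ha : Dv ζ k a) : Dv ζ k (-a) := by
  obtain ⟨c, hc, rfl⟩ := ha
  exact ⟨-c, Subalgebra.neg_mem _ hc, by ring⟩

lemma Dv.one_sub_pow (ζ : ℂ) (k : ℕ) : Dv ζ 1 (1 - ζ ^ k) := by
  refine ⟨∑ j ∈ Finset.range k, ζ ^ j, ?_, ?_⟩
  · exact Subalgebra.sum_mem _ fun j _ =>
      Subalgebra.pow_mem _ (Algebra.self_mem_adjoin_singleton ℤ ζ) _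
  · have := geom_sum_mul ζ k
    rw [pow_one]; linear_combination this

lemma Dv.natCast (ζ : ℂ) (t : ℕ) : Dv ζ 0 (t : ℂ) :=
  Dv.of_mem (Subalgebra.natCast_mem _ t)

section prim

variable {l : ℕ} {ζ : ℂ}

lemma Dv.prime_order (hl : 2 ≤ l) (hζ : IsPrimitiveRoot ζ (l ^ 2)) :
    Dv ζ (l - 1) (l : ℂ) := by
  have hζl : IsPrimitiveRoot (ζ ^ l) l := by
    have := hζ.pow (by positivity) (sq l)
    exact this
  obtain ⟨z, hz, hzeq⟩ := hζl.self_sub_one_pow_dvd_order (Nat.sub_lt (by omega) one_pos)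
  -- l = z * (ζ^l - 1)^(l-1)
  obtain ⟨c, hc, hceq⟩ := Dv.one_sub_pow ζ l
  rw [pow_one] at hceq
  refine ⟨z * (-c) ^ (l - 1), ?_, ?_⟩
  · refine Subalgebra.mul_mem _ ?_ (Subalgebra.pow_mem _ (Subalgebra.neg_mem _ hc) _)
    have hle : Algebra.adjoin ℤ ({ζ ^ l} : Set ℂ) ≤ Algebra.adjoin ℤ ({ζ} : Set ℂ) := by
      apply Algebra.adjoin_le
      simpa using Subalgebra.pow_mem _ (Algebra.self_mem_adjoin_singleton ℤ ζ) l
    exact hle hz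
  · have h1 : (ζ ^ l - 1) = -((1 - ζ) * c) := by linear_combination -hceq
    rw [hzeq, h1]
    rw [neg_mul_eq_mul_neg, mul_pow]
    ring

lemma Dv.one_sub_pow_l (hl : l.Prime) (hζ : IsPrimitiveRoot ζ (l ^ 2)) :
    Dv ζ l (1 - ζ ^ l) := by
  have hd : Dv ζ (l - 1) (l : ℂ) := Dv.prime_order hl.two_le hζ
  have h := add_pow (-(1 - ζ)) 1 l
  have hz : (-(1 - ζ) + 1) = ζ := by ring
  rw [hz] at h
  have h2 : (1 : ℂ) - ζ ^ l
      = ∑ m ∈ Finset.Ico 1 (l + 1), -((-(1 - ζ)) ^ m * (l.choose m : ℂ)) := by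
    rw [h, Finset.range_eq_Ico, Finset.sum_eq_sum_Ico_succ_bot (by omega)]
    rw [Finset.sum_neg_distrib]
    simp
  rw [h2]
  refine Dv.sum fun m hm => ?_
  rw [Finset.mem_Ico] at hm
  obtain ⟨hm1, hm2⟩ := hm
  refine Dv.neg ?_
  have hbase : Dv ζ m ((-(1 - ζ)) ^ m) :=
    ⟨(-1) ^ m, Subalgebra.pow_mem _ (Subalgebra.neg_mem _ (Subalgebra.one_mem _)) _,
      by rw [neg_pow]; ring⟩
  rcases eq_or_lt_of_le (Nat.lt_succ_iff.mp hm2) with rfl | hlt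
  · have := hbase.mul (Dv.natCast ζ (m.choose m))
    simpa using this.mono (by omega)
  · obtain ⟨c, hc⟩ := hl.dvd_choose_self (by omega) hlt
    have : Dv ζ (m + ((l - 1) + 0)) ((-(1 - ζ)) ^ m * ((l : ℂ) * (c : ℂ))) :=
      hbase.mul (hd.mul (Dv.natCast ζ c))
    have h3 : ((l.choose m : ℕ) : ℂ) = (l : ℂ) * (c : ℂ) := by
      rw [hc]; push_cast; ring
    rw [h3]
    exact this.mono (by omega)

lemma Dv.one_sub_pow_mul (hl : l.Prime) (hζ : IsPrimitiveRoot ζ (l ^ 2)) (k : ℕ) :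
    Dv ζ l (1 - ζ ^ (l * k)) := by
  obtain ⟨c, hc, hceq⟩ := Dv.one_sub_pow_l hl hζ
  refine ⟨c * ∑ j ∈ Finset.range k, (ζ ^ l) ^ j, ?_, ?_⟩
  · exact Subalgebra.mul_mem _ hc (Subalgebra.sum_mem _ fun j _ =>
      Subalgebra.pow_mem _ (Subalgebra.pow_mem _ (Algebra.self_mem_adjoin_singleton ℤ ζ) _) _)
  · have h := geom_sum_mul (ζ ^ l) k
    rw [pow_mul]
    calc (1 : ℂ) - (ζ ^ l) ^ k = (1 - ζ ^ l) * ∑ j ∈ Finset.range k, (ζ ^ l) ^ j := by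
          linear_combination h
      _ = (1 - ζ) ^ l * (c * ∑ j ∈ Finset.range k, (ζ ^ l) ^ j) := by rw [hceq]; ring

end prim

lemma pow_eq_pow_of_modEq' {M : Type*} [Monoid M] (ζ : M) {e a b : ℕ} (h1 : ζ ^ e = 1)
    (h : a ≡ b [MOD e]) : ζ ^ a = ζ ^ b := by
  have key : ∀ c : ℕ, ζ ^ c = ζ ^ (c % e) := fun c => by
    conv_lhs => rw [← Nat.div_add_mod c e]
    rw [pow_add, pow_mul, h1, one_pow, one_mul]
  rw [key a, key b, h]

section charsum

variable {F : Type*} [Field F] [Fintype F]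

lemma char_sum_eq_zero (γ : Fˣ) (hγ : ∀ x : Fˣ, ∃ k : ℕ, γ ^ k = x)
    (ind : F → ℕ) (hind : ∀ x : F, x ≠ 0 → (γ : F) ^ ind x = x)
    (ζ : ℂ) (e N : ℕ) (he : ζ ^ e = 1) (hdvd : e ∣ Fintype.card F - 1)
    (hne : ζ ^ N ≠ 1) :
    ∑ v : F, (if v = 0 then (0 : ℂ) else ζ ^ (N * ind v)) = 0 := by
  classical
  have hγord : orderOf γ = Fintype.card F - 1 := by
    rw [orderOf_eq_card_of_forall_mem_zpowers]
    · simp [Nat.card_eq_fintype_card, Fintype.card_units]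
    · intro x
      obtain ⟨k, hk⟩ := hγ x
      exact ⟨(k : ℤ), by exact_mod_cast hk⟩
  set f : F → ℂ := fun v => if v = 0 then (0 : ℂ) else ζ ^ (N * ind v) with hf
  have key : ∀ v : F, f ((γ : F) * v) = ζ ^ N * f v := by
    intro v
    rcases eq_or_ne v 0 with rfl | hv
    · simp [hf]
    · have hγv : (γ : F) * v ≠ 0 := mul_ne_zero (Units.ne_zero γ) hv
      have h1 : (γ : F) ^ ind ((γ : F) * v) = (γ : F) ^ (ind v + 1) := by
        rw [hind _ hγv, pow_succ, hind _ hv]; ring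
      have h2 : γ ^ ind ((γ : F) * v) = γ ^ (ind v + 1) := Units.ext (by exact_mod_cast h1)
      have h3 : ind ((γ : F) * v) ≡ ind v + 1 [MOD Fintype.card F - 1] := by
        rw [← hγord]; exact (pow_eq_pow_iff_modEq.mp h2)
      have h4 : N * ind ((γ : F) * v) ≡ N * (ind v + 1) [MOD e] := by
        exact Nat.ModEq.mul_left N (h3.of_dvd hdvd)
      have h5 : ζ ^ (N * ind ((γ : F) * v)) = ζ ^ (N * (ind v + 1)) :=
        pow_eq_pow_of_modEq' ζ he h4
      simp only [hf, if_neg hγv, if_neg hv, h5, mul_add, mul_one, pow_add]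
      ring
  have hsum : ∑ v : F, f ((γ : F) * v) = ∑ v : F, f v := by
    exact Fintype.sum_bijective (fun v => (γ : F) * v)
      (Units.mulLeft_bijective γ) _ _ (fun v => rfl)
  have : (ζ ^ N - 1) * ∑ v : F, f v = 0 := by
    have := hsum
    simp only [key] at this
    rw [← Finset.mul_sum] at this
    linear_combination this
  rcases mul_eq_zero.mp this with h | h
  · exact absurd (by linear_combination h) hne
  · exact h

end charsum


theorem jacobiSum_lsq_congruence_of_dvd {F : Type*} [Field F] [Fintype F]
    (p r : ℕ) (hp : p.Prime) (hr : 0 < r) (hcard : Fintype.card F = p ^ r)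
    (γ : Fˣ) (hγ : ∀ x : Fˣ, ∃ k : ℕ, γ ^ k = x)
    (ind : F → ℕ) (hind : ∀ x : F, x ≠ 0 → (γ : F) ^ ind x = x)
    (l : ℕ) (hl : l.Prime) (hl3 : 3 < l) (hqe : Fintype.card F % l ^ 2 = 1)
    (n : ℤ) (hn1 : 1 ≤ n) (hn2 : n ≤ (l : ℤ) ^ 2 - 1) (hln : (l : ℤ) ∣ n) :
    ∃ δ ∈ Algebra.adjoin ℤ ({zetaC (l ^ 2)} : Set ℂ),
      jacobiSumInd (l ^ 2) ind 1 n - (-1) = (1 - zetaC (l ^ 2)) ^ (l + 1) * δ := by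
  classical
  set q := Fintype.card F with hq
  set ζ := zetaC (l ^ 2) with hzeta
  have hl2pos : 0 < l ^ 2 := by positivity
  have hl2big : 16 ≤ l ^ 2 := by nlinarith
  have hζprim : IsPrimitiveRoot ζ (l ^ 2) := by
    have := Complex.isPrimitiveRoot_exp (l ^ 2) (by omega)
    exact this
  have hζe : ζ ^ (l ^ 2) = 1 := hζprim.pow_eq_one
  have hq1 : 1 < q := Fintype.one_lt_card
  have hdvd : l ^ 2 ∣ q - 1 := by
    refine ⟨q / l ^ 2, ?_⟩
    have := Nat.div_add_mod q (l ^ 2)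
    omega
  have hql : l ^ 2 ≤ q - 1 := Nat.le_of_dvd (by omega) hdvd
  -- the exponent N = n.toNat
  set N := n.toNat with hNdef
  have hNn : (N : ℤ) = n := Int.toNat_of_nonneg (by omega)
  have hN1 : 1 ≤ N := by omega
  have hN2 : N < l ^ 2 := by
    have : (N : ℤ) ≤ (l : ℤ) ^ 2 - 1 := by rw [hNn]; exact hn2
    have h2 : ((l ^ 2 : ℕ) : ℤ) = (l : ℤ) ^ 2 := by push_cast; ring
    omega
  obtain ⟨m, hm⟩ := (by exact_mod_cast hNn ▸ hln : l ∣ N)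
  -- order of γ
  have hγord : orderOf γ = q - 1 := by
    rw [orderOf_eq_card_of_forall_mem_zpowers]
    · simp [Nat.card_eq_fintype_card, Fintype.card_units, hq]
    · intro x
      obtain ⟨k, hk⟩ := hγ x
      exact ⟨(k : ℤ), by exact_mod_cast hk⟩
  -- ζ^(l²·k) = 1
  have hord_dvd : ∀ a : ℕ, l ^ 2 ∣ a → ζ ^ a = 1 := by
    rintro a ⟨c, rfl⟩
    rw [pow_mul, hζe, one_pow]
  -- ind 1 and ind (-1) are divisible by l²
  have hind1 : l ^ 2 ∣ ind (1 : F) := by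
    have h1 : (γ : F) ^ ind (1 : F) = 1 := hind 1 one_ne_zero
    have h2 : γ ^ ind (1 : F) = 1 := by
      rw [Units.ext_iff]; push_cast; exact h1
    have := orderOf_dvd_of_pow_eq_one h2
    rw [hγord] at this
    exact hdvd.trans this
  have hm1ne : (-1 : F) ≠ 0 := neg_ne_zero.mpr one_ne_zero
  have hindm1 : l ^ 2 ∣ ind (-1 : F) := by
    have h1 : (γ : F) ^ (2 * ind (-1 : F)) = 1 := by
      rw [show 2 * ind (-1 : F) = ind (-1 : F) * 2 by ring, pow_mul, hind _ hm1ne, neg_one_sq]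
    have h2 : γ ^ (2 * ind (-1 : F)) = 1 := by
      rw [Units.ext_iff]; push_cast; exact h1
    have h3 := orderOf_dvd_of_pow_eq_one h2
    rw [hγord] at h3
    have h4 : l ^ 2 ∣ 2 * ind (-1 : F) := hdvd.trans h3
    have hcop : (l ^ 2).Coprime 2 := Nat.Coprime.pow_left _
      ((Nat.coprime_primes hl Nat.prime_two).mpr (by omega))
    exact (Nat.Coprime.dvd_of_dvd_mul_left hcop h4)
  -- character value lemmas
  have hchi1 : ∀ v : F, chiPow (l ^ 2) ind 1 v = if v = 0 then 0 else ζ ^ (1 * ind v) := by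
    intro v
    unfold chiPow
    split
    · rfl
    · rw [← hzeta, show (1 : ℤ) * (ind v : ℤ) = ((1 * ind v : ℕ) : ℤ) by push_cast; ring,
        zpow_natCast]
  have hchin : ∀ v : F, chiPow (l ^ 2) ind n v = if v = 0 then 0 else ζ ^ (N * ind v) := by
    intro v
    unfold chiPow
    split
    · rfl
    · rw [← hzeta, show n * (ind v : ℤ) = ((N * ind v : ℕ) : ℤ) by push_cast [hNn]; ring,
        zpow_natCast]
  -- the essential support
  set S : Finset F := Finset.univ.filter (fun v => v ≠ 0 ∧ v + 1 ≠ 0) with hS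
  have hSnot : Finset.univ.filter (fun v : F => ¬(v ≠ 0 ∧ v + 1 ≠ 0)) = {0, -1} := by
    ext v
    simp only [Finset.mem_filter, Finset.mem_univ, true_and, Finset.mem_insert,
      Finset.mem_singleton, not_and_or, not_not]
    rw [add_eq_zero_iff_eq_neg]
  have h0m1 : (0 : F) ≠ -1 := by
    intro h
    exact one_ne_zero (α := F) (by linear_combination h)
  -- J as a sum over S
  have hJ : jacobiSumInd (l ^ 2) ind 1 n
      = ∑ v ∈ S, ζ ^ (1 * ind v) * ζ ^ (N * ind (v + 1)) := by
    unfold jacobiSumInd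
    rw [← Finset.sum_filter_of_ne (p := fun v : F => v ≠ 0 ∧ v + 1 ≠ 0)]
    · exact Finset.sum_congr rfl fun v hv => by
        rw [Finset.mem_filter] at hv
        rw [hchi1, hchin, if_neg hv.2.1, if_neg hv.2.2]
    · intro v _ hne
      constructor
      · intro h0
        apply hne
        rw [hchi1, if_pos h0, zero_mul]
      · intro h0
        apply hne
        rw [hchin, if_pos h0, mul_zero]
  -- the two linear character sums
  have hsum1 : ∑ v : F, (if v = 0 then (0 : ℂ) else ζ ^ (1 * ind v)) = 0 :=
    char_sum_eq_zero γ hγ ind hind ζ (l ^ 2) 1 hζe hdvd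
      (hζprim.pow_ne_one_of_pos_of_lt one_ne_zero (by omega))
  have hsumN : ∑ v : F, (if v = 0 then (0 : ℂ) else ζ ^ (N * ind v)) = 0 :=
    char_sum_eq_zero γ hγ ind hind ζ (l ^ 2) N hζe hdvd
      (hζprim.pow_ne_one_of_pos_of_lt (by omega) hN2)
  -- split a full sum into S plus the two exceptional points
  have hsplit : ∀ f : F → ℂ, ∑ v : F, f v = (∑ v ∈ S, f v) + (f 0 + f (-1)) := by
    intro f
    rw [← Finset.sum_filter_add_sum_filter_not Finset.univ
      (fun v : F => v ≠ 0 ∧ v + 1 ≠ 0) f, hSnot, Finset.sum_pair h0m1]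
  -- P1
  have hP1 : ∑ v ∈ S, ζ ^ (1 * ind v) = -1 := by
    have := hsplit (fun v => if v = 0 then (0 : ℂ) else ζ ^ (1 * ind v))
    rw [hsum1] at this
    simp only [eq_self_iff_true, if_true, if_pos, if_neg hm1ne] at this
    rw [hord_dvd (1 * ind (-1 : F)) (by simpa using hindm1)] at this
    have h2 : ∑ v ∈ S, (if v = 0 then (0 : ℂ) else ζ ^ (1 * ind v))
        = ∑ v ∈ S, ζ ^ (1 * ind v) := by
      refine Finset.sum_congr rfl fun v hv => ?_
      rw [hS, Finset.mem_filter] at hv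
      rw [if_neg hv.2.1]
    rw [h2] at this
    linear_combination -this
  -- P2 via shifting
  have hP2 : ∑ v ∈ S, ζ ^ (N * ind (v + 1)) = -1 := by
    set g : F → ℂ := fun w => if w = 0 then (0 : ℂ) else ζ ^ (N * ind w) with hg
    have hshift : ∑ v : F, g (v + 1) = ∑ w : F, g w :=
      Fintype.sum_bijective (fun v : F => v + 1) (Equiv.addRight (1 : F)).bijective
        _ _ (fun v => rfl)
    have hsplit2 := hsplit (fun v => g (v + 1))
    rw [hshift, hsumN] at hsplit2
    have hg1 : g (0 + 1) = 1 := by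
      rw [hg]
      simp only [zero_add, if_neg (one_ne_zero (α := F))]
      exact hord_dvd _ (hind1.mul_left N)
    have hg0 : g (-1 + 1) = 0 := by rw [hg]; simp
    rw [hg1, hg0] at hsplit2
    have h2 : ∑ v ∈ S, g (v + 1) = ∑ v ∈ S, ζ ^ (N * ind (v + 1)) := by
      refine Finset.sum_congr rfl fun v hv => ?_
      rw [hS, Finset.mem_filter] at hv
      rw [hg]
      simp only [if_neg hv.2.2]
    rw [h2] at hsplit2
    linear_combination -hsplit2
  -- cardinality of S
  have hScard : (S.card : ℂ) = (q : ℂ) - 2 := by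
    have h1 : S.card + (Finset.univ.filter (fun v : F => ¬(v ≠ 0 ∧ v + 1 ≠ 0))).card
        = q := by
      rw [hS]
      exact Finset.card_filter_add_card_filter_not _
    rw [hSnot] at h1
    have h2 : ({0, -1} : Finset F).card = 2 := by
      rw [Finset.card_insert_of_notMem (by simpa using h0m1), Finset.card_singleton]
    rw [h2] at h1
    have : S.card = q - 2 := by omega
    rw [this, Nat.cast_sub (by omega)]
    norm_num
  -- decomposition of the Jacobi sum
  have hJ2 : ∑ v ∈ S, ζ ^ (1 * ind v) * ζ ^ (N * ind (v + 1))
      = (∑ v ∈ S, ζ ^ (1 * ind v)) + (∑ v ∈ S, ζ ^ (N * ind (v + 1))) - (S.card : ℂ)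
        + ∑ v ∈ S, (ζ ^ (1 * ind v) - 1) * (ζ ^ (N * ind (v + 1)) - 1) := by
    rw [Finset.sum_congr rfl (fun v _ => show ζ ^ (1 * ind v) * ζ ^ (N * ind (v + 1))
      = (ζ ^ (1 * ind v) + ζ ^ (N * ind (v + 1)) - 1)
        + (ζ ^ (1 * ind v) - 1) * (ζ ^ (N * ind (v + 1)) - 1) by ring)]
    rw [Finset.sum_add_distrib, Finset.sum_sub_distrib, Finset.sum_add_distrib,
      Finset.sum_const, nsmul_eq_mul, mul_one]
  -- divisibility of the error term
  have hE : Dv ζ (l + 1) (∑ v ∈ S, (ζ ^ (1 * ind v) - 1) * (ζ ^ (N * ind (v + 1)) - 1)) := by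
    refine Dv.sum fun v _ => ?_
    have h1 : Dv ζ 1 (ζ ^ (1 * ind v) - 1) := by
      have := (Dv.one_sub_pow ζ (1 * ind v)).neg
      rwa [neg_sub] at this
    have h2 : Dv ζ l (ζ ^ (N * ind (v + 1)) - 1) := by
      have h3 : N * ind (v + 1) = l * (m * ind (v + 1)) := by rw [hm]; ring
      have := (Dv.one_sub_pow_mul hl hζprim (m * ind (v + 1))).neg
      rw [neg_sub, ← h3] at this
      exact this
    have := h1.mul h2
    rwa [show 1 + l = l + 1 by omega] at this
  -- divisibility of 1 - q
  have hq2 : Dv ζ (l + 1) (1 - (q : ℂ)) := by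
    obtain ⟨t, ht⟩ := hdvd
    have hdl : Dv ζ (l - 1) (l : ℂ) := Dv.prime_order hl.two_le hζprim
    have hDq : Dv ζ ((l - 1) + ((l - 1) + 0)) ((l : ℂ) * ((l : ℂ) * (t : ℂ))) :=
      hdl.mul (hdl.mul (Dv.natCast ζ t))
    have hcast : (1 : ℂ) - (q : ℂ) = -((l : ℂ) * ((l : ℂ) * (t : ℂ))) := by
      have : ((q - 1 : ℕ) : ℂ) = ((l ^ 2 * t : ℕ) : ℂ) := by rw [ht]
      rw [Nat.cast_sub (by omega)] at this
      push_cast at this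
      linear_combination -this
    rw [hcast]
    exact (hDq.mono (by omega)).neg
  -- assemble
  have hfinal : jacobiSumInd (l ^ 2) ind 1 n - (-1)
      = (1 - (q : ℂ)) + ∑ v ∈ S, (ζ ^ (1 * ind v) - 1) * (ζ ^ (N * ind (v + 1)) - 1) := by
    rw [hJ, hJ2, hP1, hP2, hScard]
    ring
  obtain ⟨c, hc, hceq⟩ := hq2.add hE
  exact ⟨c, hc, by rw [hfinal, hceq]⟩
end

section
/- With q ≡ 1 (mod 2l²) and w = ind_γ(2), one has the exact identity J_{2l²}(1, l²) = ζ_{l²}^{−w}·J_{l²}(1, (l²−1)/2), where ζ_{l²} = ζ² and J_{l²} is the Jacobi sum of order l² formed with the character χ_{l²} = χ². -/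
open Finset
open scoped Classical

theorem jacobiSum_one_lsq_eq {F : Type*} [Field F] [Fintype F]
    (p r : ℕ) (hp : p.Prime) (hr : 0 < r) (hcard : Fintype.card F = p ^ r)
    (γ : Fˣ) (hγ : ∀ x : Fˣ, ∃ k : ℕ, γ ^ k = x)
    (ind : F → ℕ) (hind : ∀ x : F, x ≠ 0 → (γ : F) ^ ind x = x)
    (l : ℕ) (hl : l.Prime) (hl3 : 3 ≤ l) (hqe : Fintype.card F % (2 * l ^ 2) = 1)
    (w : ℕ) (hw : (γ : F) ^ w = 2) :
    jacobiSumInd (2 * l ^ 2) ind 1 ((l : ℤ) ^ 2) =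
      zetaC (l ^ 2) ^ (-(w : ℤ)) * jacobiSumInd (l ^ 2) ind 1 (((l : ℤ) ^ 2 - 1) / 2) := by
  classical
  set q := Fintype.card F with hqdef
  set e : ℕ := 2 * l ^ 2 with he
  set L : ℕ := l ^ 2 with hL
  have hl2 : 2 ≤ l := le_trans (by norm_num) hl3
  have hL9 : 9 ≤ L := by
    have : 3 * 3 ≤ l * l := Nat.mul_le_mul hl3 hl3
    simpa [hL, pow_two] using this
  have heL : e = 2 * L := by rw [he, hL]
  have he0 : e ≠ 0 := by omega
  have hL0 : L ≠ 0 := by omega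
  set n : ℕ := q - 1 with hn
  have hq2 : 2 ≤ q := Fintype.one_lt_card
  have hedvd : e ∣ n := by
    have := Nat.div_add_mod q e
    exact ⟨q / e, by omega⟩
  have hn0 : 0 < n := by omega
  have h2n : 2 ∣ n := dvd_trans ⟨l ^ 2, he⟩ hedvd
  have horder : orderOf γ = n := by
    have h1 : orderOf γ = Nat.card Fˣ := by
      apply orderOf_eq_card_of_forall_mem_zpowers
      intro x
      obtain ⟨k, hk⟩ := hγ x
      rw [Subgroup.mem_zpowers_iff]
      exact ⟨k, by exact_mod_cast hk⟩
    rw [h1, Nat.card_eq_fintype_card, Fintype.card_units, ← hqdef, hn]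

  -- the root of unity layer
  set η : ℂ := zetaC e with hη
  have hprim : IsPrimitiveRoot η e := Complex.isPrimitiveRoot_exp e he0
  have hηe : η ^ e = 1 := hprim.pow_eq_one
  have hη0 : η ≠ 0 := Complex.exp_ne_zero _
  have hηn : η ^ n = 1 := by
    obtain ⟨t, ht⟩ := hedvd
    rw [ht, pow_mul, hηe, one_pow]
  have hηne : ∀ N : ℕ, 0 < N → N < e → η ^ N ≠ 1 := fun N h1 h2 =>
    hprim.pow_ne_one_of_pos_of_lt h1.ne' h2
  have hηL : η ^ L = -1 := by
    have h1 : η ^ L * η ^ L = 1 := by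
      rw [← pow_add, show L + L = e by omega]
      exact hηe
    rcases mul_self_eq_one_iff.mp h1 with h | h
    · exact absurd h (hηne L (by omega) (by omega))
    · exact h
  have hζL : zetaC L = η ^ 2 := by
    rw [hη]
    unfold zetaC
    rw [← Complex.exp_nat_mul]
    congr 1
    have hlC : (l : ℂ) ≠ 0 := Nat.cast_ne_zero.mpr (by omega)
    rw [he, hL]
    push_cast
    field_simp
  have hpowmod : ∀ (x : ℂ), x ^ n = 1 → ∀ a b : ℕ, a ≡ b [MOD n] → x ^ a = x ^ b := by
    intro x hx a b hab
    have key : ∀ a : ℕ, x ^ a = x ^ (a % n) := by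
      intro a
      conv_lhs => rw [← Nat.div_add_mod a n]
      rw [pow_add, pow_mul, hx, one_pow, one_mul]
    rw [key a, key b]
    unfold Nat.ModEq at hab
    rw [hab]
  have hγF : (γ : F) ≠ 0 := Units.ne_zero γ
  have hindspec : ∀ (m : ℕ) (x : F), x ≠ 0 → (γ : F) ^ m = x → m ≡ ind x [MOD n] := by
    intro m x hx hm
    have h1 : (γ : F) ^ m = (γ : F) ^ ind x := by rw [hm, hind x hx]
    have h2 : γ ^ m = γ ^ ind x := Units.ext (by push_cast; exact h1)
    have h3 := pow_eq_pow_iff_modEq.mp h2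
    rwa [horder] at h3

  -- the multiplicative function c
  set c : F → ℂ := fun x => if x = 0 then 0 else η ^ ind x with hcdef0
  have hc0 : c 0 = 0 := by simp [hcdef0]
  have hcdef : ∀ x : F, x ≠ 0 → c x = η ^ ind x := fun x hx => by simp [hcdef0, hx]
  have hcne : ∀ x : F, x ≠ 0 → c x ≠ 0 := fun x hx => by
    rw [hcdef x hx]; exact pow_ne_zero _ hη0
  have hcmul : ∀ x y : F, c (x * y) = c x * c y := by
    intro x y
    by_cases hx : x = 0
    · simp [hx, hc0]
    by_cases hy : y = 0
    · simp [hy, hc0]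
    have hxy : x * y ≠ 0 := mul_ne_zero hx hy
    rw [hcdef _ hx, hcdef _ hy, hcdef _ hxy, ← pow_add]
    exact hpowmod η hηn _ _
      (hindspec (ind x + ind y) (x * y) hxy (by rw [pow_add, hind x hx, hind y hy])).symm
  have hce : ∀ x : F, x ≠ 0 → c x ^ e = 1 := by
    intro x hx
    rw [hcdef x hx, ← pow_mul, mul_comm, pow_mul, hηe, one_pow]
  set k : ℂ := η ^ w with hk
  have hk0 : k ≠ 0 := pow_ne_zero _ hη0
  have h2F : (2 : F) ≠ 0 := by rw [← hw]; exact pow_ne_zero _ hγF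
  have hc2 : c 2 = k := by
    rw [hcdef 2 h2F, hk]
    exact (hpowmod η hηn w (ind 2) (hindspec w 2 h2F hw)).symm
  have hk2L : k ^ (2 * L) = 1 := by
    rw [hk, ← pow_mul, mul_comm w (2 * L), ← heL, pow_mul, hηe, one_pow]
  have hcL : ∀ t : F, t ≠ 0 → c t ^ L = (-1 : ℂ) ^ ind t := by
    intro t ht
    rw [hcdef t ht, ← pow_mul, mul_comm, pow_mul, hηL]
  have h4F : (4 : F) ≠ 0 := by
    have h44 : (4 : F) = 2 * 2 := by norm_num
    rw [h44]; exact mul_ne_zero h2F h2F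
  have hc4 : c 4 = k ^ 2 := by
    have h44 : (4 : F) = 2 * 2 := by norm_num
    rw [h44, hcmul, hc2]; ring
  have hm1F : (-1 : F) ≠ 0 := neg_ne_zero.mpr one_ne_zero
  -- square-root counting
  have hcount : ∀ C : F, ((univ.filter (fun s : F => s ^ 2 = C)).card : ℂ) = 1 + c C ^ L := by
    intro C
    by_cases hC : C = 0
    · subst hC
      have hfil : univ.filter (fun s : F => s ^ 2 = 0) = {0} := by
        ext s
        simp [pow_eq_zero_iff]
      rw [hfil, hc0]
      simp [zero_pow hL0]
    · by_cases hpar : Even (ind C)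
      · obtain ⟨m, hm⟩ := hpar
        set s₀ : F := (γ : F) ^ m with hs₀
        have hs₀0 : s₀ ≠ 0 := pow_ne_zero _ hγF
        have hsq : s₀ ^ 2 = C := by
          rw [hs₀, ← pow_mul, show m * 2 = m + m by ring, ← hm, hind C hC]
        have hs₀ne : s₀ ≠ -s₀ := by
          intro h
          apply h2F
          have h2s : (2 : F) * s₀ = 0 := by linear_combination h
          rcases mul_eq_zero.mp h2s with h' | h'
          · exact h'
          · exact absurd h' hs₀0
        have hfil : univ.filter (fun s : F => s ^ 2 = C) = {s₀, -s₀} := by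
          ext x
          simp only [mem_filter, mem_univ, true_and, mem_insert, mem_singleton]
          constructor
          · intro hx
            have hfac : (x - s₀) * (x + s₀) = 0 := by linear_combination hx - hsq
            rcases mul_eq_zero.mp hfac with h' | h'
            · left; linear_combination h'
            · right; linear_combination h'
          · rintro (rfl | rfl)
            · exact hsq
            · rw [neg_sq]; exact hsq
        rw [hfil, card_insert_of_notMem (by simpa using hs₀ne), card_singleton]
        rw [hcL C hC, Even.neg_one_pow ⟨m, hm⟩]
        norm_num
      · have hfil : univ.filter (fun s : F => s ^ 2 = C) = ∅ := by
          ext x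
          simp only [mem_filter, mem_univ, true_and, notMem_empty, iff_false]
          intro hx
          have hx0 : x ≠ 0 := by
            rintro rfl
            exact hC (by rw [← hx]; ring)
          have hmod : ind x * 2 ≡ ind C [MOD n] :=
            hindspec (ind x * 2) C hC (by rw [pow_mul, hind x hx0, hx])
          have hdvd : (2 : ℤ) ∣ (ind C : ℤ) - ind x * 2 :=
            dvd_trans (Int.natCast_dvd_natCast.mpr h2n) hmod.dvd
          obtain ⟨t, ht⟩ := hdvd
          refine hpar ?_
          rw [Nat.even_iff]
          omega
        rw [hfil, hcL C hC, Odd.neg_one_pow (Nat.not_even_iff_odd.mp hpar)]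
        simp

  -- nontrivial character sums vanish
  have hcharsum : ∀ N : ℕ, 0 < N → N < e → ∑ v : F, c v ^ N = 0 := by
    intro N hN0 hNe
    set x : ℂ := η ^ N with hx
    have hx1 : x ≠ 1 := hηne N hN0 hNe
    have hxn : x ^ n = 1 := by
      rw [hx, ← pow_mul, mul_comm, pow_mul, hηn, one_pow]
    have step : ∑ v : F, c v ^ N = ∑ m ∈ range n, x ^ m := by
      rw [← Finset.sum_erase_add _ _ (mem_univ (0 : F)), hc0, zero_pow hN0.ne', add_zero]
      refine Finset.sum_nbij' (fun v => ind v % n) (fun m => (γ : F) ^ m) ?_ ?_ ?_ ?_ ?_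
      · intro a ha
        exact mem_range.mpr (Nat.mod_lt _ hn0)
      · intro m hm
        exact mem_erase.mpr ⟨pow_ne_zero _ hγF, mem_univ _⟩
      · intro a ha
        have ha0 : a ≠ 0 := (mem_erase.mp ha).1
        have hu : γ ^ (ind a % n) = γ ^ ind a := by
          rw [← horder]; exact pow_mod_orderOf γ (ind a)
        have hu' : (γ : F) ^ (ind a % n) = (γ : F) ^ ind a := by exact_mod_cast congrArg Units.val hu
        rw [hu', hind a ha0]
      · intro m hm
        have hm' : m < n := mem_range.mp hm
        have hspec : m % n = ind ((γ : F) ^ m) % n := hindspec m ((γ : F) ^ m) (pow_ne_zero _ hγF) rfl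
        exact hspec.symm.trans (Nat.mod_eq_of_lt hm')
      · intro a ha
        have ha0 : a ≠ 0 := (mem_erase.mp ha).1
        rw [hcdef a ha0, ← pow_mul, mul_comm (ind a) N, pow_mul, ← hx]
        exact hpowmod x hxn (ind a) (ind a % n) (Nat.mod_modEq _ _).symm
    rw [step, geom_sum_eq hx1, hxn, sub_self, zero_div]
  -- sum with one exceptional point
  have hsum_exc : ∀ (A B : F → ℂ) (v₀ : F), (∀ v, v ≠ v₀ → A v = B v) → A v₀ = 0 →
      ∑ v : F, A v = (∑ v : F, B v) - B v₀ := by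
    intro A B v₀ hAB hA0
    rw [← Finset.sum_erase_add _ _ (mem_univ v₀), hA0, add_zero]
    rw [Finset.sum_congr rfl (fun v hv => hAB v (mem_erase.mp hv).1)]
    exact Finset.sum_erase_eq_sub (mem_univ v₀)

  -- main objects
  set G : F → ℂ := fun v => c v * c (v + 1) ^ L with hG
  set Tt : F → ℂ := fun u => c u ^ 2 * c (u + 1) ^ (L - 1) with hTt
  set fq : F → F := fun u => u ^ 2 / (4 * (u + 1)) with hfq
  clear_value η c k G Tt fq
  have hGm1 : G (-1) = 0 := by
    rw [hG]
    dsimp only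
    rw [show (-1 : F) + 1 = 0 by ring, hc0, zero_pow hL0, mul_zero]
  have hG0 : G 0 = 0 := by rw [hG]; dsimp only; rw [hc0, zero_mul]
  -- Equation 1 : the 2-to-1 substitution
  have hEq1 : ∑ u : F, G (fq u) = ∑ v : F, (1 + c (4 * v ^ 2 + 4 * v) ^ L) * G v := by
    have hrhs : ∀ v : F, (1 + c (4 * v ^ 2 + 4 * v) ^ L) * G v
        = ∑ x : F, (if x ^ 2 = 4 * v ^ 2 + 4 * v then G v else 0) := by
      intro v
      rw [← hcount (4 * v ^ 2 + 4 * v), ← Finset.sum_filter, Finset.sum_const, nsmul_eq_mul]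
    have hGfqm1 : G (fq (-1)) = 0 := by
      have hfm1 : fq (-1) = 0 := by
        rw [hfq]
        dsimp only
        rw [show (4 : F) * (-1 + 1) = 0 by ring, div_zero]
      rw [hfm1, hG0]
    have hbij : ∑ u ∈ univ.erase (-1 : F), G (fq u)
        = ∑ p ∈ (univ ×ˢ univ).filter (fun p : F × F => p.2 ^ 2 = 4 * p.1 ^ 2 + 4 * p.1), G p.1 := by
      refine Finset.sum_nbij' (fun u => (fq u, u - 2 * fq u)) (fun p => 2 * p.1 + p.2) ?_ ?_ ?_ ?_ ?_
      · intro u hu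
        have hu1 : u + 1 ≠ 0 := by
          intro h
          exact (mem_erase.mp hu).1 (by linear_combination h)
        have hden : (4 : F) * (u + 1) ≠ 0 := mul_ne_zero h4F hu1
        have key : fq u * (4 * (u + 1)) = u ^ 2 := by
          rw [hfq]; exact div_mul_cancel₀ _ hden
        rw [mem_filter]
        refine ⟨mem_product.mpr ⟨mem_univ _, mem_univ _⟩, ?_⟩
        dsimp only
        linear_combination (-1 : F) * key
      · intro p hp
        have hcond := (mem_filter.mp hp).2
        refine mem_erase.mpr ⟨?_, mem_univ _⟩
        intro h
        have hx : p.2 = -1 - 2 * p.1 := by linear_combination h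
        rw [hx] at hcond
        exact one_ne_zero (α := F) (by linear_combination hcond)
      · intro u hu
        dsimp only
        ring
      · intro p hp
        have hcond := (mem_filter.mp hp).2
        have hne : 2 * p.1 + p.2 ≠ -1 := by
          intro h
          have hx : p.2 = -1 - 2 * p.1 := by linear_combination h
          rw [hx] at hcond
          exact one_ne_zero (α := F) (by linear_combination hcond)
        have hden : (4 : F) * (2 * p.1 + p.2 + 1) ≠ 0 := by
          apply mul_ne_zero h4F
          intro h
          exact hne (by linear_combination h)
        have hfqv : fq (2 * p.1 + p.2) = p.1 := by
          rw [hfq]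
          dsimp only
          rw [show (2 * p.1 + p.2) ^ 2 = p.1 * (4 * (2 * p.1 + p.2 + 1)) by linear_combination hcond]
          exact mul_div_cancel_right₀ _ hden
        rw [hfqv]
        exact Prod.ext rfl (by ring)
      · intro u hu
        rfl
    rw [← Finset.sum_erase_add _ _ (mem_univ (-1 : F)), hGfqm1, add_zero, hbij,
      Finset.sum_filter, Finset.sum_product]
    exact Finset.sum_congr rfl (fun v _ => (hrhs v).symm)

  -- Equation 2 : the quadratic-twisted sum
  have hEq2 : ∑ v : F, c (4 * v ^ 2 + 4 * v) ^ L * G v = - c (-1) ^ (L + 1) := by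
    have key : ∀ v : F, v ≠ -1 → c (4 * v ^ 2 + 4 * v) ^ L * G v = c v ^ (L + 1) := by
      intro v hv
      by_cases hv0 : v = 0
      · subst hv0
        rw [hG]
        dsimp only
        rw [hc0, zero_pow (by omega : L + 1 ≠ 0)]
        ring
      · have hv1 : v + 1 ≠ 0 := fun h => hv (by linear_combination h)
        have hfac : (4 * v ^ 2 + 4 * v : F) = 4 * (v * (v + 1)) := by ring
        rw [hfac, hcmul, hcmul, hG]
        dsimp only
        rw [mul_pow, mul_pow, hc4]
        have h1 : (k ^ 2) ^ L = 1 := by rw [← pow_mul]; exact hk2L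
        have h2 : c (v + 1) ^ L * c (v + 1) ^ L = 1 := by
          rw [← pow_add, show L + L = e by omega]
          exact hce _ hv1
        rw [h1, one_mul, pow_succ]
        linear_combination (c v ^ L * c v) * h2
    have hA0 : c (4 * (-1 : F) ^ 2 + 4 * (-1)) ^ L * G (-1) = 0 := by rw [hGm1, mul_zero]
    rw [hsum_exc _ (fun v => c v ^ (L + 1)) (-1) key hA0,
      hcharsum (L + 1) (by omega) (by omega), zero_sub]
  -- pointwise relation between G ∘ fq and Tt
  have hpt : ∀ u : F, u ≠ -2 → k ^ 2 * G (fq u) = Tt u := by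
    intro u hu2
    by_cases hu0 : u = 0
    · subst hu0
      have hfq0 : fq 0 = 0 := by
        rw [hfq]; dsimp only; rw [show (0:F)^2 = 0 by ring, zero_div]
      rw [hfq0, hG0, hTt, mul_zero]
      dsimp only
      rw [hc0, zero_pow two_ne_zero, zero_mul]
    by_cases hu1 : u = -1
    · subst hu1
      have hfm1 : fq (-1) = 0 := by
        rw [hfq]; dsimp only; rw [show (4 : F) * (-1 + 1) = 0 by ring, div_zero]
      rw [hfm1, hG0, hTt, mul_zero]
      dsimp only
      rw [show (-1 : F) + 1 = 0 by ring, hc0, zero_pow (by omega : L - 1 ≠ 0), mul_zero]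
    · have hu1' : u + 1 ≠ 0 := fun h => hu1 (by linear_combination h)
      have hu2' : u + 2 ≠ 0 := fun h => hu2 (by linear_combination h)
      have hden : (4 : F) * (u + 1) ≠ 0 := mul_ne_zero h4F hu1'
      have hfqu : fq u * (4 * (u + 1)) = u ^ 2 := by
        rw [hfq]; exact div_mul_cancel₀ _ hden
      have hfq0 : fq u ≠ 0 := by
        intro h
        rw [h, zero_mul] at hfqu
        exact hu0 (pow_eq_zero_iff two_ne_zero |>.mp hfqu.symm)
      have hfq1m : (fq u + 1) * (4 * (u + 1)) = (u + 2) ^ 2 := by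
        rw [add_mul, hfqu]; ring
      have hfq10 : fq u + 1 ≠ 0 := by
        intro h
        rw [h, zero_mul] at hfq1m
        exact hu2' (pow_eq_zero_iff two_ne_zero |>.mp hfq1m.symm)
      have e1 : c (fq u) * (k ^ 2 * c (u + 1)) = c u ^ 2 := by
        rw [← hc4, ← hcmul, ← hcmul, hfqu, show (u ^ 2 : F) = u * u by ring, hcmul, ← pow_two]
      have e2 : c (fq u + 1) * (c 4 * c (u + 1)) = c (u + 2) ^ 2 := by
        rw [← hcmul, ← hcmul, hfq1m, show ((u + 2) ^ 2 : F) = (u + 2) * (u + 2) by ring, hcmul, ← pow_two]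
      have hY : c (fq u + 1) ^ L * c (u + 1) ^ L = 1 := by
        have h3 := congrArg (· ^ L) e2
        rw [mul_pow, mul_pow, hc4, ← pow_mul, hk2L, ← pow_mul,
          show 2 * L = e by omega, hce _ hu2'] at h3
        calc c (fq u + 1) ^ L * c (u + 1) ^ L
            = c (fq u + 1) ^ L * (1 * c (u + 1) ^ L) := by ring
          _ = 1 := h3
      have hbb : c (u + 1) ^ (L - 1) * (c (u + 1) ^ L * c (u + 1)) = 1 := by
        rw [← pow_succ, ← pow_add, show L - 1 + (L + 1) = e by omega]
        exact hce _ hu1'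
      have hbne : c (u + 1) ^ (L + 1) ≠ 0 := pow_ne_zero _ (hcne _ hu1')
      apply mul_right_cancel₀ hbne
      rw [hG, hTt]
      dsimp only
      rw [pow_succ]
      linear_combination (k ^ 2 * c (fq u) * c (u + 1)) * hY + e1 - (c u ^ 2) * hbb
  -- Equation 3
  have hEq3 : ∑ u : F, k ^ 2 * G (fq u) = (∑ u : F, Tt u) - k ^ 2 * c (-1) ^ (L + 1) := by
    have hA0 : k ^ 2 * G (fq (-2)) = 0 := by
      have hfm2 : fq (-2) = -1 := by
        rw [hfq]
        dsimp only
        rw [div_eq_iff (by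
          intro h
          exact h4F (by linear_combination (-1 : F) * h))]
        ring
      rw [hfm2, hGm1, mul_zero]
    have hTt2 : Tt (-2) = k ^ 2 * c (-1) ^ (L + 1) := by
      rw [hTt]
      dsimp only
      rw [show (-2 : F) = -1 * 2 by ring, hcmul, hc2,
        show ((-1 : F) * 2 + 1) = -1 by ring, mul_pow,
        show L + 1 = 2 + (L - 1) by omega, pow_add]
      ring
    rw [hsum_exc _ Tt (-2) hpt hA0, hTt2]

  -- main identity
  have hmain : k ^ 2 * ∑ v : F, G v = ∑ u : F, Tt u := by
    have hsplit : ∑ v : F, (1 + c (4 * v ^ 2 + 4 * v) ^ L) * G v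
        = (∑ v : F, G v) + ∑ v : F, c (4 * v ^ 2 + 4 * v) ^ L * G v := by
      rw [← Finset.sum_add_distrib]
      exact Finset.sum_congr rfl (fun v _ => by ring)
    have h5 : ∑ u : F, G (fq u) = (∑ v : F, G v) - c (-1) ^ (L + 1) := by
      rw [hEq1, hsplit, hEq2]
      ring
    have h7 : ∑ u : F, k ^ 2 * G (fq u) = k ^ 2 * ∑ u : F, G (fq u) := by
      rw [Finset.mul_sum]
    rw [h7, h5] at hEq3
    linear_combination hEq3
  -- conversion of the statement
  have conv_a : ∀ x : F, chiPow e ind 1 x = c x := by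
    intro x
    by_cases hx : x = 0
    · rw [hx]
      simp [chiPow, hc0]
    · rw [hcdef x hx]
      simp only [chiPow, if_neg hx, one_mul, ← hη]
      exact zpow_natCast η (ind x)
  have conv_b : ∀ x : F, chiPow e ind ((l : ℤ) ^ 2) x = c x ^ L := by
    intro x
    by_cases hx : x = 0
    · rw [hx]
      simp [chiPow, hc0, zero_pow hL0]
    · have hcast : ((l : ℤ) ^ 2 * (ind x : ℤ)) = ((L * ind x : ℕ) : ℤ) := by
        rw [hL]; push_cast; ring
      rw [hcdef x hx]
      simp only [chiPow, if_neg hx, ← hη]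
      rw [hcast, zpow_natCast, mul_comm L (ind x), pow_mul]
  have conv_c : ∀ x : F, chiPow L ind 1 x = c x ^ 2 := by
    intro x
    by_cases hx : x = 0
    · rw [hx]
      simp [chiPow, hc0]
    · rw [hcdef x hx]
      simp only [chiPow, if_neg hx, one_mul, hζL]
      rw [zpow_natCast, pow_right_comm]
  obtain ⟨t, ht⟩ : Odd L := by
    rw [hL]
    exact (hl.odd_of_ne_two (by omega)).pow
  have conv_d : ∀ x : F, chiPow L ind (((l : ℤ) ^ 2 - 1) / 2) x = c x ^ (L - 1) := by
    intro x
    by_cases hx : x = 0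
    · rw [hx]
      simp [chiPow, hc0, zero_pow (by omega : L - 1 ≠ 0)]
    · have hM : (((l : ℤ) ^ 2 - 1) / 2) = (t : ℤ) := by
        have h1 : ((l : ℤ) ^ 2) = (L : ℤ) := by rw [hL]; push_cast; ring
        rw [h1, show ((L : ℤ) - 1) = 2 * t by omega]
        exact Int.mul_ediv_cancel_left _ two_ne_zero
      have hcast : ((t : ℤ) * (ind x : ℤ)) = ((t * ind x : ℕ) : ℤ) := by push_cast; ring
      rw [hcdef x hx]
      simp only [chiPow, if_neg hx, hζL, hM]
      rw [hcast, zpow_natCast, ← pow_mul,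
        show 2 * (t * ind x) = ind x * (L - 1) by rw [show L - 1 = 2 * t by omega]; ring,
        pow_mul]
  have conv_e : zetaC L ^ (-(w : ℤ)) = (k ^ 2)⁻¹ := by
    rw [hζL, zpow_neg, zpow_natCast, pow_right_comm, ← hk]
  unfold jacobiSumInd
  simp only [conv_a, conv_b, conv_c, conv_d, conv_e]
  have hGsum : ∑ v : F, c v * c (v + 1) ^ L = ∑ v : F, G v :=
    Finset.sum_congr rfl (fun v _ => by rw [hG])
  have hTsum : ∑ v : F, c v ^ 2 * c (v + 1) ^ (L - 1) = ∑ v : F, Tt v :=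
    Finset.sum_congr rfl (fun v _ => by rw [hTt])
  rw [hGsum, hTsum, ← hmain, inv_mul_cancel_left₀ (pow_ne_zero 2 hk0)]
end

section
/- Let d be an odd integer with 1 ≤ d ≤ 2l−1 and d ≠ l. Then q·J_{2l²}(1, dl) = J_{2l²}(1, l²)·J_{2l²}(dl, l²)·conj(J_{2l²}(1+dl, l²−1)), where conj denotes complex conjugation on Q(ζ_{2l²}). -/
open Finset
open scoped Classical

section Core
variable {F : Type*} [Field F] [Fintype F]

omit [Fintype F] in
lemma mulchar_neg_one_sq (χ : MulChar F ℂ) : χ (-1) * χ (-1) = 1 := by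
  rw [← map_mul, neg_mul_neg, one_mul, map_one]

lemma gaussSum_mul_gaussSum_inv {χ : MulChar F ℂ} (hχ : χ ≠ 1)
    {ψ : AddChar F ℂ} (hψ : ψ.IsPrimitive) :
    gaussSum χ ψ * gaussSum χ⁻¹ ψ = χ⁻¹ (-1) * (Fintype.card F : ℂ) := by
  rw [← mul_gaussSum_inv_eq_gaussSum χ⁻¹ ψ, mul_left_comm,
    gaussSum_mul_gaussSum_eq_card hχ hψ]

lemma core_identity (χ φ ρ : MulChar F ℂ) (hρ2 : ρ * ρ = 1) (hρ1 : ρ ≠ 1)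
    (hχφ : χ * φ ≠ 1) (hχρ : χ * ρ ≠ 1) (hφρ : φ * ρ ≠ 1) :
    (Fintype.card F : ℂ) * jacobiSum χ φ =
      χ (-1) * (jacobiSum χ ρ * jacobiSum φ ρ * jacobiSum (χ * φ)⁻¹ (χ * ρ)) := by
  have : Finite F := Finite.of_fintype F
  set q : ℂ := (Fintype.card F : ℂ) with hqdef
  have hq : q ≠ 0 := Nat.cast_ne_zero.mpr Fintype.card_ne_zero
  set ψ : AddChar F ℂ := AddChar.FiniteField.primitiveChar_to_Complex F with hψdef
  have hψ : ψ.IsPrimitive := AddChar.FiniteField.primitiveChar_to_Complex_isPrimitive F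
  have hρinv : ρ⁻¹ = ρ := inv_eq_of_mul_eq_one_right hρ2
  have hE : (χ * φ)⁻¹ * (χ * ρ) = (φ * ρ)⁻¹ := by
    rw [mul_inv, mul_inv, hρinv, mul_mul_mul_comm, inv_mul_cancel, one_mul]
  have hφρ' : (φ * ρ)⁻¹ ≠ 1 := inv_ne_one.mpr hφρ
  have hquad : ρ.IsQuadratic := by
    intro x
    by_cases hx : IsUnit x
    · have : ρ x * ρ x = 1 := by
        rw [← MulChar.mul_apply, hρ2, MulChar.one_apply hx]
      rcases mul_self_eq_one_iff.mp this with h | h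
      · exact Or.inr (Or.inl h)
      · exact Or.inr (Or.inr h)
    · exact Or.inl (ρ.map_nonunit hx)
  set a := gaussSum χ ψ
  set b := gaussSum φ ψ
  set c := gaussSum ρ ψ
  set u := gaussSum (χ * φ) ψ
  set v := gaussSum (χ * ρ) ψ
  set w := gaussSum (φ * ρ) ψ
  set u' := gaussSum (χ * φ)⁻¹ ψ
  set w' := gaussSum (φ * ρ)⁻¹ ψ
  have h1 : u * jacobiSum χ φ = a * b := jacobiSum_mul_nontrivial hχφ ψ
  have h2 : v * jacobiSum χ ρ = a * c := jacobiSum_mul_nontrivial hχρ ψ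
  have h3 : w * jacobiSum φ ρ = b * c := jacobiSum_mul_nontrivial hφρ ψ
  have h4 : w' * jacobiSum (χ * φ)⁻¹ (χ * ρ) = u' * v := by
    have := jacobiSum_mul_nontrivial (χ := (χ * φ)⁻¹) (φ := χ * ρ) (by rw [hE]; exact hφρ') ψ
    rwa [hE] at this
  have g2 : c * c = ρ (-1) * q := by
    have := gaussSum_sq hρ1 hquad hψ
    rwa [pow_two] at this
  have g3 : u * u' = (χ * φ)⁻¹ (-1) * q := gaussSum_mul_gaussSum_inv hχφ hψ
  have g4 : w * w' = (φ * ρ)⁻¹ (-1) * q := gaussSum_mul_gaussSum_inv hφρ hψ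
  have sgn : (φ * ρ)⁻¹ (-1) = χ (-1) * (ρ (-1) * (χ * φ)⁻¹ (-1)) := by
    have e1 : χ (-1) * χ (-1) = 1 := mulchar_neg_one_sq χ
    have e2 : φ (-1) * φ (-1) = 1 := mulchar_neg_one_sq φ
    have e3 : ρ (-1) * ρ (-1) = 1 := mulchar_neg_one_sq ρ
    have iχ : (χ (-1))⁻¹ = χ (-1) := inv_eq_of_mul_eq_one_right e1
    have iφ : (φ (-1))⁻¹ = φ (-1) := inv_eq_of_mul_eq_one_right e2
    have iρ : (ρ (-1))⁻¹ = ρ (-1) := inv_eq_of_mul_eq_one_right e3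
    rw [MulChar.inv_apply_eq_inv', MulChar.inv_apply_eq_inv', MulChar.mul_apply,
      MulChar.mul_apply, mul_inv, mul_inv, iχ, iφ, iρ]
    linear_combination (-(φ (-1) * ρ (-1))) * e1
  have hu : u ≠ 0 := gaussSum_ne_zero_of_nontrivial hq hχφ hψ
  have hv : v ≠ 0 := gaussSum_ne_zero_of_nontrivial hq hχρ hψ
  have hw : w ≠ 0 := gaussSum_ne_zero_of_nontrivial hq hφρ hψ
  have hw' : w' ≠ 0 := gaussSum_ne_zero_of_nontrivial hq hφρ' hψ
  apply mul_right_cancel₀ (b := u * (v * (w * w')))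
    (by exact mul_ne_zero hu (mul_ne_zero hv (mul_ne_zero hw hw')))
  linear_combination (q * v * w * w') * h1 + (q * a * b * v) * g4 + (q * q * a * b * v) * sgn
    - (χ (-1) * u * w * w' * jacobiSum φ ρ * jacobiSum (χ * φ)⁻¹ (χ * ρ)) * h2
    - (χ (-1) * a * c * u * w' * jacobiSum (χ * φ)⁻¹ (χ * ρ)) * h3
    - (χ (-1) * a * b * c * c * u) * h4
    - (χ (-1) * a * b * u * u' * v) * g2
    - (χ (-1) * a * b * v * ρ (-1) * q) * g3

end Core

section Bridge
variable {F : Type*} [Field F] [Fintype F]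

omit [Fintype F] in
lemma zetaC_norm (n : ℕ) (hn : n ≠ 0) : ‖zetaC n‖ = 1 :=
  Complex.norm_eq_one_of_pow_eq_one (Complex.isPrimitiveRoot_exp n hn).pow_eq_one hn

lemma conj_jacobiSumInd (n : ℕ) (hn : n ≠ 0) (ind : F → ℕ) (a b : ℤ) :
    (starRingEnd ℂ) (jacobiSumInd n ind a b) = jacobiSumInd n ind (-a) (-b) := by
  have hconj : ∀ (i : ℤ) (x : F),
      (starRingEnd ℂ) (chiPow n ind i x) = chiPow n ind (-i) x := by
    intro i x
    unfold chiPow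
    split_ifs with h
    · simp
    · rw [map_zpow₀, ← Complex.inv_eq_conj (zetaC_norm n hn), inv_zpow, ← zpow_neg, neg_mul]
  simp only [jacobiSumInd, map_sum, map_mul, hconj]

lemma sum_shift (χ φ : MulChar F ℂ) :
    ∑ v : F, χ v * φ (v + 1) = χ (-1) * jacobiSum χ φ := by
  rw [jacobiSum, mul_sum, ← Equiv.sum_comp (Equiv.neg F) (fun v : F => χ v * φ (v + 1))]
  refine Finset.sum_congr rfl fun x _ => ?_
  simp only [Equiv.neg_apply]
  rw [show (-x : F) = -1 * x by ring, map_mul,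
    show (-1 : F) * x + 1 = 1 - x by ring, mul_assoc]

lemma chi0_spec (n : ℕ) (hn : n ≠ 0) (hdvd : n ∣ Fintype.card F - 1)
    (γ : Fˣ) (hγ : ∀ x : Fˣ, ∃ k : ℕ, γ ^ k = x)
    (ind : F → ℕ) (hind : ∀ x : F, x ≠ 0 → (γ : F) ^ ind x = x) :
    ∃ χ₀ : MulChar F ℂ,
      (∀ (k : ℕ) (x : F), chiPow n ind (k : ℤ) x = (χ₀ ^ k) x) ∧
      (∀ (k : ℕ) (x : F), chiPow n ind (-(k : ℤ)) x = (χ₀ ^ k)⁻¹ x) ∧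
      (∀ k : ℕ, ¬ n ∣ k → χ₀ ^ k ≠ 1) ∧
      χ₀ ^ n = 1 := by
  have hζ : IsPrimitiveRoot (zetaC n) n := Complex.isPrimitiveRoot_exp n hn
  have hζu : IsUnit (zetaC n) := hζ.isUnit hn
  have horder : orderOf γ = Fintype.card F - 1 := by
    rw [orderOf_eq_card_of_forall_mem_zpowers (g := γ)
      (fun x => by
        obtain ⟨k, hk⟩ := hγ x
        exact Subgroup.mem_zpowers_iff.mpr ⟨(k : ℤ), by rw [zpow_natCast, hk]⟩),
      Nat.card_eq_fintype_card, Fintype.card_units]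
  have key : ∀ a b : ℕ, (γ : F) ^ a = (γ : F) ^ b → zetaC n ^ a = zetaC n ^ b := by
    intro a b h
    have hu : γ ^ a = γ ^ b := Units.ext (by simpa using h)
    have hmod : a ≡ b [MOD n] :=
      Nat.ModEq.of_dvd (horder ▸ hdvd) ((pow_eq_pow_iff_modEq).mp hu)
    have hred : ∀ m : ℕ, zetaC n ^ m = zetaC n ^ (m % n) := by
      intro m
      conv_lhs => rw [← Nat.div_add_mod m n]
      rw [pow_add, pow_mul, hζ.pow_eq_one, one_pow, one_mul]
    rw [hred a, hred b, hmod]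
  let f : Fˣ →* ℂˣ :=
    { toFun := fun x => hζu.unit ^ ind (x : F)
      map_one' := by
        refine Units.ext ?_
        have h1 : (γ : F) ^ ind ((1 : Fˣ) : F) = (γ : F) ^ 0 := by
          rw [pow_zero]; exact hind 1 one_ne_zero
        simpa using key _ 0 h1
      map_mul' := by
        intro x y
        refine Units.ext ?_
        have hxy : ((x * y : Fˣ) : F) ≠ 0 := Units.ne_zero _
        have h1 : (γ : F) ^ ind ((x * y : Fˣ) : F) = (γ : F) ^ (ind (x : F) + ind (y : F)) := by
          rw [pow_add, hind _ hxy, hind _ (Units.ne_zero x), hind _ (Units.ne_zero y)]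
          rfl
        simpa [pow_add] using key _ _ h1 }
  set χ₀ : MulChar F ℂ := MulChar.ofUnitHom f with hχ₀
  have happ : ∀ x : F, x ≠ 0 → χ₀ x = zetaC n ^ ind x := by
    intro x hx
    have : χ₀ ((Units.mk0 x hx : Fˣ) : F) = f (Units.mk0 x hx) := MulChar.ofUnitHom_coe f _
    simpa [f] using this
  have hpow : ∀ (k : ℕ) (x : F), chiPow n ind (k : ℤ) x = (χ₀ ^ k) x := by
    intro k x
    by_cases hx : x = 0
    · subst hx
      rw [chiPow, if_pos rfl, MulChar.map_nonunit _ not_isUnit_zero]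
    · rw [chiPow, if_neg hx]
      rcases Nat.eq_zero_or_pos k with rfl | hk0
      · simp [MulChar.one_apply (Ne.isUnit hx)]
      · rw [MulChar.pow_apply' χ₀ hk0.ne' x, happ x hx, ← pow_mul,
          ← zpow_natCast (zetaC n), Nat.cast_mul, mul_comm (ind x : ℤ)]
  refine ⟨χ₀, hpow, ?_, ?_, ?_⟩
  · intro k x
    by_cases hx : x = 0
    · subst hx
      rw [chiPow, if_pos rfl, MulChar.map_nonunit _ not_isUnit_zero]
    · rw [MulChar.inv_apply_eq_inv', ← hpow k x, chiPow, chiPow, if_neg hx, if_neg hx,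
        ← zpow_neg, neg_mul]
  · intro k hk hcontra
    have h1 : (χ₀ ^ k) ((γ : Fˣ) : F) = 1 := by rw [hcontra, MulChar.one_apply_coe]
    rw [MulChar.pow_apply_coe, happ _ (Units.ne_zero γ)] at h1
    have hγ1 : (γ : F) ^ ind ((γ : Fˣ) : F) = (γ : F) ^ 1 := by
      rw [pow_one]; exact hind _ (Units.ne_zero γ)
    rw [key _ 1 hγ1, pow_one] at h1
    exact hk (hζ.pow_eq_one_iff_dvd k |>.mp h1)
  · apply MulChar.ext
    intro x
    rw [MulChar.pow_apply_coe, MulChar.one_apply_coe, happ _ (Units.ne_zero x),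
      ← pow_mul, mul_comm, pow_mul, hζ.pow_eq_one, one_pow]

end Bridge

theorem jacobiSum_dl_q_mul {F : Type*} [Field F] [Fintype F]
    (p r : ℕ) (hp : p.Prime) (hr : 0 < r) (hcard : Fintype.card F = p ^ r)
    (γ : Fˣ) (hγ : ∀ x : Fˣ, ∃ k : ℕ, γ ^ k = x)
    (ind : F → ℕ) (hind : ∀ x : F, x ≠ 0 → (γ : F) ^ ind x = x)
    (l : ℕ) (hl : l.Prime) (hl3 : 3 ≤ l) (hqe : Fintype.card F % (2 * l ^ 2) = 1)
    (d : ℤ) (hodd : Odd d) (hd1 : 1 ≤ d) (hd2 : d ≤ 2 * (l : ℤ) - 1) (hdl : d ≠ (l : ℤ)) :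
    (Fintype.card F : ℂ) * jacobiSumInd (2 * l ^ 2) ind 1 (d * l) =
      jacobiSumInd (2 * l ^ 2) ind 1 ((l : ℤ) ^ 2) *
        jacobiSumInd (2 * l ^ 2) ind (d * l) ((l : ℤ) ^ 2) *
        (starRingEnd ℂ) (jacobiSumInd (2 * l ^ 2) ind (1 + d * l) ((l : ℤ) ^ 2 - 1)) := by
  have hl1 : 1 ≤ l := by omega
  have hl21 : 1 ≤ l ^ 2 := Nat.one_le_pow _ _ (by omega)
  have hn : 2 * l ^ 2 ≠ 0 := by positivity
  have hdvd : 2 * l ^ 2 ∣ Fintype.card F - 1 := by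
    have h := Nat.div_add_mod (Fintype.card F) (2 * l ^ 2)
    exact ⟨Fintype.card F / (2 * l ^ 2), by omega⟩
  obtain ⟨χ₀, hpow, hpowneg, hne, hord⟩ := chi0_spec (2 * l ^ 2) hn hdvd γ hγ ind hind
  set e : ℕ := d.toNat with hedef
  have he : (e : ℤ) = d := Int.toNat_of_nonneg (by omega)
  have he1 : 1 ≤ e := by omega
  have he2 : e ≤ 2 * l - 1 := by omega
  have heL : e ≠ l := by omega
  have hldvd : l ∣ 2 * l ^ 2 := ⟨2 * l, by ring⟩
  -- divisibility facts
  have hd1' : ¬ 2 * l ^ 2 ∣ l ^ 2 := by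
    intro h
    have := Nat.le_of_dvd (by positivity) h
    have h2 : l ^ 2 + l ^ 2 ≤ l ^ 2 := by
      calc l ^ 2 + l ^ 2 = 2 * l ^ 2 := by ring
      _ ≤ l ^ 2 := this
    omega
  have hd2' : ¬ 2 * l ^ 2 ∣ 1 + e * l := by
    intro h
    have h1 : l ∣ 1 + e * l := dvd_trans hldvd h
    have h2 : l ∣ e * l := dvd_mul_left l e
    have h3 : l ∣ 1 := (Nat.dvd_add_right h2).mp (by rwa [add_comm] at h1)
    have := Nat.le_of_dvd one_pos h3
    omega
  have hd3' : ¬ 2 * l ^ 2 ∣ 1 + l ^ 2 := by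
    intro h
    have h1 : l ∣ 1 + l ^ 2 := dvd_trans hldvd h
    have h2 : l ∣ l ^ 2 := dvd_pow_self l two_ne_zero
    have h3 : l ∣ 1 := (Nat.dvd_add_right h2).mp (by rwa [add_comm] at h1)
    have := Nat.le_of_dvd one_pos h3
    omega
  have hd4' : ¬ 2 * l ^ 2 ∣ e * l + l ^ 2 := by
    intro h
    have h1 : l * (2 * l) ∣ l * (e + l) := by
      have e1 : l * (2 * l) = 2 * l ^ 2 := by ring
      have e2 : l * (e + l) = e * l + l ^ 2 := by ring
      rw [e1, e2]; exact h
    have h2 : 2 * l ∣ e + l := (mul_dvd_mul_iff_left (by omega : l ≠ 0)).mp h1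
    have h3 : e + l = 2 * l := by
      refine Nat.eq_of_dvd_of_lt_two_mul (by omega) h2 (by omega)
    omega
  -- character nontriviality
  have hρ1 : χ₀ ^ (l ^ 2) ≠ 1 := hne _ hd1'
  have hρ2 : χ₀ ^ (l ^ 2) * χ₀ ^ (l ^ 2) = 1 := by
    rw [← pow_add, show l ^ 2 + l ^ 2 = 2 * l ^ 2 by ring]
    exact hord
  have hAeq : χ₀ ^ (1 + e * l) = χ₀ * χ₀ ^ (e * l) := by rw [pow_add, pow_one]
  have hCeq : χ₀ ^ (1 + l ^ 2) = χ₀ * χ₀ ^ (l ^ 2) := by rw [pow_add, pow_one]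
  have hχφ : χ₀ * χ₀ ^ (e * l) ≠ 1 := by rw [← hAeq]; exact hne _ hd2'
  have hχρ : χ₀ * χ₀ ^ (l ^ 2) ≠ 1 := by rw [← hCeq]; exact hne _ hd3'
  have hφρ : χ₀ ^ (e * l) * χ₀ ^ (l ^ 2) ≠ 1 := by
    rw [← pow_add]; exact hne _ hd4'
  have hB : (χ₀ ^ (l ^ 2 - 1))⁻¹ = χ₀ * χ₀ ^ (l ^ 2) := by
    apply inv_eq_of_mul_eq_one_right
    rw [← hCeq, ← pow_add, ← add_assoc, Nat.sub_add_cancel hl21,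
      show l ^ 2 + l ^ 2 = 2 * l ^ 2 by ring]
    exact hord
  -- translations
  have hJ : ∀ a b : ℕ, jacobiSumInd (2 * l ^ 2) ind (a : ℤ) (b : ℤ)
      = (χ₀ ^ a) (-1) * jacobiSum (χ₀ ^ a) (χ₀ ^ b) := by
    intro a b
    rw [jacobiSumInd]
    simp_rw [hpow]
    exact sum_shift _ _
  have hJn : ∀ a b : ℕ, jacobiSumInd (2 * l ^ 2) ind (-(a : ℤ)) (-(b : ℤ))
      = (χ₀ ^ a)⁻¹ (-1) * jacobiSum (χ₀ ^ a)⁻¹ (χ₀ ^ b)⁻¹ := by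
    intro a b
    rw [jacobiSumInd]
    simp_rw [hpowneg]
    exact sum_shift _ _
  have cast1 : ((e * l : ℕ) : ℤ) = d * l := by push_cast [he]; ring
  have cast2 : ((1 + e * l : ℕ) : ℤ) = 1 + d * l := by push_cast [he]; ring
  have cast3 : ((l ^ 2 - 1 : ℕ) : ℤ) = (l : ℤ) ^ 2 - 1 := by
    rw [Nat.cast_sub hl21]; push_cast; ring
  have T1 : jacobiSumInd (2 * l ^ 2) ind 1 (d * (l : ℤ))
      = χ₀ (-1) * jacobiSum χ₀ (χ₀ ^ (e * l)) := by
    have h := hJ 1 (e * l)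
    rw [Nat.cast_one, cast1, pow_one] at h
    exact h
  have T2 : jacobiSumInd (2 * l ^ 2) ind 1 ((l : ℤ) ^ 2)
      = χ₀ (-1) * jacobiSum χ₀ (χ₀ ^ (l ^ 2)) := by
    have h := hJ 1 (l ^ 2)
    rw [Nat.cast_one, Nat.cast_pow, pow_one] at h
    exact h
  have T3 : jacobiSumInd (2 * l ^ 2) ind (d * (l : ℤ)) ((l : ℤ) ^ 2)
      = (χ₀ ^ (e * l)) (-1) * jacobiSum (χ₀ ^ (e * l)) (χ₀ ^ (l ^ 2)) := by
    have h := hJ (e * l) (l ^ 2)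
    rw [Nat.cast_pow, cast1] at h
    exact h
  have T4 : (starRingEnd ℂ) (jacobiSumInd (2 * l ^ 2) ind (1 + d * l) ((l : ℤ) ^ 2 - 1))
      = (χ₀ * χ₀ ^ (e * l))⁻¹ (-1)
        * jacobiSum (χ₀ * χ₀ ^ (e * l))⁻¹ (χ₀ * χ₀ ^ (l ^ 2)) := by
    rw [conj_jacobiSumInd (2 * l ^ 2) hn ind]
    have h := hJn (1 + e * l) (l ^ 2 - 1)
    rw [cast2, cast3, hB, hAeq] at h
    exact h
  rw [T1, T2, T3, T4]
  have core := core_identity χ₀ (χ₀ ^ (e * l)) (χ₀ ^ (l ^ 2)) hρ2 hρ1 hχφ hχρ hφρ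
  have s1 : χ₀ (-1) * χ₀ (-1) = 1 := mulchar_neg_one_sq χ₀
  have s2 : (χ₀ ^ (e * l)) (-1) * (χ₀ ^ (e * l)) (-1) = 1 := mulchar_neg_one_sq _
  have s3 : (χ₀ * χ₀ ^ (e * l))⁻¹ (-1) * (χ₀ (-1) * (χ₀ ^ (e * l)) (-1)) = 1 := by
    rw [MulChar.inv_apply_eq_inv', MulChar.mul_apply]
    exact inv_mul_cancel₀
      (mul_ne_zero (left_ne_zero_of_mul_eq_one s1) (left_ne_zero_of_mul_eq_one s2))
  linear_combination χ₀ (-1) * core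
    + (jacobiSum χ₀ (χ₀ ^ (l ^ 2)) * jacobiSum (χ₀ ^ (e * l)) (χ₀ ^ (l ^ 2))
        * jacobiSum (χ₀ * χ₀ ^ (e * l))⁻¹ (χ₀ * χ₀ ^ (l ^ 2))) * s1
    - (jacobiSum χ₀ (χ₀ ^ (l ^ 2)) * jacobiSum (χ₀ ^ (e * l)) (χ₀ ^ (l ^ 2))
        * jacobiSum (χ₀ * χ₀ ^ (e * l))⁻¹ (χ₀ * χ₀ ^ (l ^ 2))) * s3
end

section
/- Let d be an odd integer with 1 ≤ d ≤ 2l−1 and d ≠ l, and let w = ind_γ(2). Then J_{2l²}(dl, l²) ≡ −ζ_{l²}^{−wdl} (mod (1−ζ_{l²})²), where ζ_{l²} = ζ². -/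
open Finset
open scoped Classical

lemma jacAux_geom (x : ℂ) (n : ℕ) : 1 - x ^ n = (1 - x) * ∑ i ∈ Finset.range n, x ^ i := by
  have h := geom_sum_mul x n
  linear_combination h

lemma jacAux_sum (x : ℂ) (n : ℕ) : ∃ c ∈ Algebra.adjoin ℤ ({x} : Set ℂ),
    ∑ i ∈ Finset.range n, x ^ i = (n : ℂ) + (1 - x) * c := by
  induction n with
  | zero => exact ⟨0, zero_mem _, by simp⟩
  | succ n ih =>
    obtain ⟨c, hc, hce⟩ := ih
    refine ⟨c - ∑ i ∈ Finset.range n, x ^ i,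
      sub_mem hc (Subalgebra.sum_mem _ fun i _ =>
        pow_mem (Algebra.self_mem_adjoin_singleton ℤ x) i), ?_⟩
    rw [Finset.sum_range_succ]
    push_cast
    linear_combination hce - jacAux_geom x n

lemma jacAux_l (l : ℕ) (x : ℂ) (hgeom : ∑ i ∈ Finset.range l, (x ^ l) ^ i = 0) :
    ∃ c ∈ Algebra.adjoin ℤ ({x} : Set ℂ), (l : ℂ) = (1 - x) * c := by
  have h1 : (l : ℂ) = ∑ i ∈ Finset.range l, (1 - (x ^ l) ^ i) := by
    rw [Finset.sum_sub_distrib, hgeom]; simp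
  refine ⟨∑ i ∈ Finset.range l, ∑ j ∈ Finset.range (l * i), x ^ j,
    Subalgebra.sum_mem _ fun i _ => Subalgebra.sum_mem _ fun j _ =>
      pow_mem (Algebra.self_mem_adjoin_singleton ℤ x) j, ?_⟩
  rw [h1, Finset.mul_sum]
  refine Finset.sum_congr rfl fun i _ => ?_
  rw [← pow_mul]
  exact jacAux_geom x (l * i)

lemma jacAux_key (l : ℕ) (x : ℂ) (hgeom : ∑ i ∈ Finset.range l, (x ^ l) ^ i = 0) (j : ℕ) :
    ∃ c ∈ Algebra.adjoin ℤ ({x} : Set ℂ), 1 - x ^ (l * j) = (1 - x) ^ 2 * c := by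
  obtain ⟨cl, hcl, hcle⟩ := jacAux_l l x hgeom
  obtain ⟨cs, hcs, hcse⟩ := jacAux_sum x (l * j)
  refine ⟨cs + (j : ℂ) * cl, add_mem hcs
    (mul_mem (Subalgebra.natCast_mem _ j) hcl), ?_⟩
  push_cast at hcse
  linear_combination jacAux_geom x (l * j) + (1 - x) * hcse + ((j : ℂ) * (1 - x)) * hcle

lemma jacAux_negOnePow {a b : ℕ} (h : a % 2 = b % 2) : ((-1 : ℂ)) ^ a = (-1) ^ b := by
  rcases Nat.even_or_odd a with ha | ha
  · have hb : Even b := by rw [Nat.even_iff] at *; omega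
    rw [ha.neg_one_pow, hb.neg_one_pow]
  · have hb : Odd b := by rw [Nat.odd_iff] at *; omega
    rw [ha.neg_one_pow, hb.neg_one_pow]

theorem jacobiSum_dl_lsq_congruence {F : Type*} [Field F] [Fintype F]
    (p r : ℕ) (hp : p.Prime) (hr : 0 < r) (hcard : Fintype.card F = p ^ r)
    (γ : Fˣ) (hγ : ∀ x : Fˣ, ∃ k : ℕ, γ ^ k = x)
    (ind : F → ℕ) (hind : ∀ x : F, x ≠ 0 → (γ : F) ^ ind x = x)
    (l : ℕ) (hl : l.Prime) (hl3 : 3 ≤ l) (hqe : Fintype.card F % (2 * l ^ 2) = 1)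
    (d : ℤ) (hodd : Odd d) (hd1 : 1 ≤ d) (hd2 : d ≤ 2 * (l : ℤ) - 1) (hdl : d ≠ (l : ℤ))
    (w : ℕ) (hw : (γ : F) ^ w = 2) :
    ∃ δ ∈ Algebra.adjoin ℤ ({zetaC (l ^ 2)} : Set ℂ),
      jacobiSumInd (2 * l ^ 2) ind (d * l) ((l : ℤ) ^ 2) -
          (-(zetaC (l ^ 2) ^ (-((w : ℤ) * d * l)))) =
        (1 - zetaC (l ^ 2)) ^ 2 * δ := by
  classical
  -- abbreviations
  set x : ℂ := zetaC (l ^ 2) with hxdef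
  set ζ : ℂ := zetaC (2 * l ^ 2) with hζdef
  set A : Subalgebra ℤ ℂ := Algebra.adjoin ℤ ({x} : Set ℂ) with hAdef
  -- basic numerics
  have hl20 : l ^ 2 ≠ 0 := by positivity
  have hN0 : 2 * l ^ 2 ≠ 0 := by positivity
  have hlodd : l % 2 = 1 := Nat.odd_iff.mp (hl.odd_of_ne_two (by omega))
  set dn : ℕ := d.toNat with hdndef
  have hdn : (dn : ℤ) = d := Int.toNat_of_nonneg (by omega)
  have hdnodd : dn % 2 = 1 := by
    obtain ⟨t, ht⟩ := hodd
    omega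
  -- roots of unity
  have hxprim : IsPrimitiveRoot x (l ^ 2) := by
    simpa [hxdef, zetaC] using Complex.isPrimitiveRoot_exp _ hl20
  have hζprim : IsPrimitiveRoot ζ (2 * l ^ 2) := by
    simpa [hζdef, zetaC] using Complex.isPrimitiveRoot_exp _ hN0
  have hxz : x = ζ ^ 2 := by
    rw [hxdef, hζdef, zetaC, zetaC, ← Complex.exp_nat_mul]
    congr 1
    have hl0 : ((l : ℂ)) ≠ 0 := by
      have : l ≠ 0 := by omega
      exact_mod_cast this
    push_cast
    field_simp
  have hζl2 : ζ ^ (l ^ 2) = -1 := by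
    have h1 : ζ ^ (l ^ 2) * ζ ^ (l ^ 2) = 1 := by
      rw [← pow_add]
      have : l ^ 2 + l ^ 2 = 2 * l ^ 2 := by ring
      rw [this, hζprim.pow_eq_one]
    have h2 : ζ ^ (l ^ 2) ≠ 1 := by
      intro h
      have hdvd := (hζprim.pow_eq_one_iff_dvd _).mp h
      have := Nat.le_of_dvd (by positivity) hdvd
      nlinarith
    rcases mul_self_eq_one_iff.mp h1 with h | h
    · exact absurd h h2
    · exact h
  have hζ2 : zetaC 2 = -1 := by
    have h : 2 * (Real.pi : ℂ) * Complex.I / ((2 : ℕ) : ℂ) = Real.pi * Complex.I := by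
      push_cast; ring
    rw [zetaC, h, Complex.exp_pi_mul_I]
  have hyprim : IsPrimitiveRoot (x ^ l) l := hxprim.pow (by positivity) (by ring)
  have hgeom : ∑ i ∈ Finset.range l, (x ^ l) ^ i = 0 := by
    have h1 : (x ^ l - 1) ≠ 0 := sub_ne_zero.mpr (hyprim.ne_one (by omega))
    have h2 : (∑ i ∈ Finset.range l, (x ^ l) ^ i) * (x ^ l - 1) = 0 := by
      rw [geom_sum_mul, ← pow_mul, show l * l = l ^ 2 from by ring, hxprim.pow_eq_one, sub_self]
    rcases mul_eq_zero.mp h2 with h | h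
    · exact h
    · exact absurd h h1
  have key : ∀ j : ℕ, ∃ c ∈ A, 1 - x ^ (l * j) = (1 - x) ^ 2 * c :=
    fun j => jacAux_key l x hgeom j
  -- the half-exponent m with x ^ m = -ζ
  set m : ℕ := (l ^ 2 + 1) / 2 with hmdef
  have h2m : 2 * m = l ^ 2 + 1 := by
    have : l ^ 2 % 2 = 1 := by
      rw [pow_two, Nat.mul_mod, hlodd]
    omega
  have hxm : x ^ m = -ζ := by
    rw [hxz, ← pow_mul, show 2 * m = l ^ 2 + 1 from h2m, pow_succ, hζl2]
    ring
  -- order of γ and parity lemma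
  have hq1 : 1 < Fintype.card F := Fintype.one_lt_card
  have hNdvd : 2 * l ^ 2 ∣ Fintype.card F - 1 := by
    refine ⟨Fintype.card F / (2 * l ^ 2), ?_⟩
    have h := Nat.div_add_mod (Fintype.card F) (2 * l ^ 2)
    rw [hqe] at h
    exact Nat.sub_eq_of_eq_add h.symm
  have hord : orderOf γ = Fintype.card F - 1 := by
    rw [orderOf_eq_card_of_forall_mem_zpowers, Nat.card_eq_fintype_card, Fintype.card_units]
    intro u
    obtain ⟨k, hk⟩ := hγ u
    exact ⟨(k : ℤ), by simpa using hk⟩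
  have h2dvd : 2 ∣ orderOf γ := by
    rw [hord]
    exact dvd_trans ⟨l ^ 2, rfl⟩ hNdvd
  have parity : ∀ a b : ℕ, (γ : F) ^ a = (γ : F) ^ b → ((-1 : ℂ)) ^ a = (-1) ^ b := by
    intro a b hab
    have h1 : γ ^ a = γ ^ b := Units.ext (by simpa using hab)
    have h2 : a ≡ b [MOD orderOf γ] := pow_eq_pow_iff_modEq.mp h1
    exact jacAux_negOnePow (h2.of_dvd h2dvd)
  -- the quadratic character η
  set η : F → ℂ := fun v => if v = 0 then 0 else (-1) ^ (ind v) with hηdef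
  have hη_chi : ∀ v : F, chiPow 2 ind 1 v = η v := by
    intro v
    by_cases hv : v = 0
    · simp [chiPow, hηdef, hv]
    · simp only [chiPow, hηdef, if_neg hv]
      rw [hζ2, one_mul, zpow_natCast]
  have hη1 : η 1 = 1 := by
    simp only [hηdef, if_neg (one_ne_zero : (1 : F) ≠ 0)]
    have := parity (ind 1) 0 (by rw [hind 1 one_ne_zero, pow_zero])
    simpa using this
  have hηγ : η (γ : F) = -1 := by
    simp only [hηdef, if_neg (Units.ne_zero γ)]
    have := parity (ind (γ : F)) 1 (by rw [hind _ (Units.ne_zero γ), pow_one])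
    simpa using this
  have hmul : ∀ a b : F, η (a * b) = η a * η b := by
    intro a b
    by_cases ha : a = 0
    · simp [hηdef, ha]
    by_cases hb : b = 0
    · simp [hηdef, hb]
    have hab : a * b ≠ 0 := mul_ne_zero ha hb
    simp only [hηdef, if_neg ha, if_neg hb, if_neg hab]
    rw [← pow_add]
    apply parity
    rw [pow_add, hind a ha, hind b hb, hind (a * b) hab]
  have hηsq : ∀ a : F, a ≠ 0 → η a * η a = 1 := by
    intro a ha
    simp only [hηdef, if_neg ha]
    rw [← pow_add]
    exact Even.neg_one_pow ⟨ind a, by ring⟩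
  have hT : ∑ v : F, η v = 0 := by
    have h1 : ∑ v : F, η ((γ : F) * v) = ∑ v : F, η v := by
      apply Fintype.sum_equiv (Equiv.mulLeft₀ (γ : F) (Units.ne_zero γ))
      intro v
      rfl
    have h2 : ∑ v : F, η ((γ : F) * v) = -∑ v : F, η v := by
      rw [Finset.sum_congr rfl fun v _ => hmul (γ : F) v, ← Finset.mul_sum, hηγ]
      ring
    linear_combination (h2 - h1) / 2
  -- the quadratic Jacobi sum is -1
  have hS : jacobiSumInd 2 ind 1 1 = -1 := by
    have hstep : ∀ v : F, chiPow 2 ind 1 v * chiPow 2 ind 1 (v + 1)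
        = if v = 0 then 0 else η (1 + v⁻¹) := by
      intro v
      by_cases hv : v = 0
      · simp [chiPow, hv]
      rw [if_neg hv, hη_chi, hη_chi]
      by_cases hv1 : v + 1 = 0
      · have hvm : v = -1 := by linear_combination hv1
        have h0 : (1 : F) + v⁻¹ = 0 := by
          rw [hvm, inv_neg, inv_one]; ring
        rw [hv1, h0]
        simp [hηdef]
      · have hb : (1 : F) + v⁻¹ ≠ 0 := by
          intro h
          apply hv1
          have hv' : v⁻¹ = -1 := by linear_combination h
          have : v = -1 := by
            rw [← inv_inv v, hv', inv_neg, inv_one]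
          rw [this]; ring
        have hfac : v + 1 = v * (1 + v⁻¹) := by
          rw [mul_add, mul_one, mul_inv_cancel₀ hv]
        rw [hfac, hmul v (1 + v⁻¹), ← mul_assoc, hηsq v hv, one_mul]
    rw [jacobiSumInd, Finset.sum_congr rfl fun v _ => hstep v]
    have hinv : ∑ v : F, (if v = 0 then 0 else η (1 + v⁻¹))
        = ∑ v : F, (if v = 0 then 0 else η (1 + v)) := by
      apply Fintype.sum_equiv (⟨fun v : F => v⁻¹, fun v => v⁻¹, inv_inv, inv_inv⟩ : F ≃ F)
      intro v
      by_cases hv : v = 0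
      · simp [hv]
      · simp [hv, inv_eq_zero, Equiv.coe_fn_mk]
    rw [hinv]
    have hsplit : ∑ v : F, (if v = 0 then 0 else η (1 + v))
        = (∑ v : F, η (1 + v)) - 1 := by
      have hterm : ∀ v : F, (if v = 0 then 0 else η (1 + v))
          = η (1 + v) - (if v = 0 then 1 else 0) := by
        intro v
        by_cases hv : v = 0
        · rw [if_pos hv, if_pos hv, hv]
          simp [hη1]
        · simp [hv]
      rw [Finset.sum_congr rfl fun v _ => hterm v, Finset.sum_sub_distrib]
      simp
    rw [hsplit]
    have hshift : ∑ v : F, η (1 + v) = ∑ v : F, η v := by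
      apply Fintype.sum_equiv (Equiv.addLeft (1 : F))
      intro v
      rfl
    rw [hshift, hT]
    ring
  -- term-by-term comparison of the two Jacobi sums
  have hterm : ∀ v : F,
      ∃ c ∈ A, chiPow (2 * l ^ 2) ind (d * l) v * chiPow (2 * l ^ 2) ind ((l : ℤ) ^ 2) (v + 1)
        - chiPow 2 ind 1 v * chiPow 2 ind 1 (v + 1) = (1 - x) ^ 2 * c := by
    intro v
    by_cases hv : v = 0
    · exact ⟨0, zero_mem _, by simp [chiPow, hv]⟩
    by_cases hv1 : v + 1 = 0
    · exact ⟨0, zero_mem _, by simp [chiPow, hv, hv1]⟩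
    set k : ℕ := ind v with hkdef
    set k' : ℕ := ind (v + 1) with hk'def
    have hpar : (dn * l * k) % 2 = k % 2 := by
      have h1 : (dn * l) % 2 = 1 := by
        rw [Nat.mul_mod, hdnodd, hlodd]
      rw [Nat.mul_mod, h1]
      omega
    have e1 : chiPow (2 * l ^ 2) ind (d * l) v = (-1 : ℂ) ^ k * (x ^ l) ^ (m * dn * k) := by
      rw [chiPow, if_neg hv]
      have hcast : (d * (l : ℤ)) * ((ind v : ℕ) : ℤ) = ((dn * l * k : ℕ) : ℤ) := by
        rw [← hdn]
        push_cast
        ring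
      rw [hcast, zpow_natCast]
      have hζeq : zetaC (2 * l ^ 2) = -(x ^ m) := by
        rw [← hζdef]
        linear_combination hxm
      rw [hζeq, neg_pow, jacAux_negOnePow hpar]
      congr 1
      rw [← pow_mul, ← pow_mul]
      congr 1
      ring
    have e2 : chiPow (2 * l ^ 2) ind ((l : ℤ) ^ 2) (v + 1) = (-1 : ℂ) ^ k' := by
      rw [chiPow, if_neg hv1]
      have hcast : ((l : ℤ) ^ 2) * ((ind (v + 1) : ℕ) : ℤ) = ((l ^ 2 * k' : ℕ) : ℤ) := by
        push_cast
        ring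
      rw [hcast, zpow_natCast, pow_mul, hζl2]
    have e3 : chiPow 2 ind 1 v = (-1 : ℂ) ^ k := by
      rw [hη_chi, hηdef]
      simp [if_neg hv]
      rfl
    have e4 : chiPow 2 ind 1 (v + 1) = (-1 : ℂ) ^ k' := by
      rw [hη_chi, hηdef]
      simp [if_neg hv1]
      rfl
    obtain ⟨c, hc, hce⟩ := key (m * dn * k)
    refine ⟨-((-1) ^ (k + k') * c), neg_mem (mul_mem (pow_mem (neg_mem (one_mem A)) _) hc), ?_⟩
    rw [e1, e2, e3, e4]
    linear_combination (-((-1 : ℂ) ^ (k + k'))) * hce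
  -- summing up
  have hsum : ∃ c ∈ A, jacobiSumInd (2 * l ^ 2) ind (d * l) ((l : ℤ) ^ 2)
      - jacobiSumInd 2 ind 1 1 = (1 - x) ^ 2 * c := by
    rw [jacobiSumInd, jacobiSumInd, ← Finset.sum_sub_distrib]
    refine Finset.sum_induction _ (fun y => ∃ c ∈ A, y = (1 - x) ^ 2 * c) ?_ ?_ ?_
    · rintro a b ⟨c1, hc1, h1⟩ ⟨c2, hc2, h2⟩
      exact ⟨c1 + c2, add_mem hc1 hc2, by rw [h1, h2]; ring⟩
    · exact ⟨0, zero_mem _, by ring⟩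
    · exact fun v _ => hterm v
  -- reduction of the zpow on the right-hand side
  have hx0 : x ≠ 0 := by
    rw [hxdef, zetaC]
    exact Complex.exp_ne_zero _
  set t : ℤ := -((w : ℤ) * d * (l : ℤ)) with htdef
  have hl2z : ((l ^ 2 : ℕ) : ℤ) ≠ 0 := by
    exact_mod_cast hl20
  have hxl1 : x ^ (l ^ 2) = 1 := hxprim.pow_eq_one
  have ered : x ^ t = x ^ (t % ((l ^ 2 : ℕ) : ℤ)) := by
    conv_lhs => rw [show t = ((l ^ 2 : ℕ) : ℤ) * (t / ((l ^ 2 : ℕ) : ℤ)) + t % ((l ^ 2 : ℕ) : ℤ)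
      from (Int.mul_ediv_add_emod t _).symm]
    rw [zpow_add₀ hx0, zpow_mul, zpow_natCast, hxl1, one_zpow, one_mul]
  set tm : ℤ := t % ((l ^ 2 : ℕ) : ℤ) with htmdef
  have htm0 : 0 ≤ tm := Int.emod_nonneg t hl2z
  have hdl' : (l : ℤ) ∣ tm := by
    have h1 : (l : ℤ) ∣ t := ⟨-((w : ℤ) * d), by rw [htdef]; ring⟩
    have h2 : (l : ℤ) ∣ ((l ^ 2 : ℕ) : ℤ) * (t / ((l ^ 2 : ℕ) : ℤ)) :=
      ⟨(l : ℤ) * (t / ((l ^ 2 : ℕ) : ℤ)), by push_cast; ring⟩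
    rw [htmdef, Int.emod_def]
    exact dvd_sub h1 h2
  obtain ⟨s, hs⟩ := hdl'
  have hl0z : (0 : ℤ) < (l : ℤ) := by
    exact_mod_cast (by omega : 0 < l)
  have hs0 : 0 ≤ s := by
    by_contra hneg
    push_neg at hneg
    nlinarith
  have hxred : x ^ t = x ^ (l * s.toNat) := by
    rw [ered, hs]
    have : (l : ℤ) * s = ((l * s.toNat : ℕ) : ℤ) := by
      push_cast
      rw [Int.toNat_of_nonneg hs0]
    rw [this, zpow_natCast]
  -- final assembly
  obtain ⟨c1, hc1, he1⟩ := hsum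
  obtain ⟨c2, hc2, he2⟩ := key s.toNat
  rw [hS] at he1
  refine ⟨c1 - c2, sub_mem hc1 hc2, ?_⟩
  rw [show zetaC (l ^ 2) ^ (-((w : ℤ) * d * (l : ℤ))) = x ^ t from by rw [htdef], hxred]
  linear_combination he1 - he2
end
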